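/- arXiv:1603.04505 — 9 statements merged into one kernel-verified Lean document; each statement's English description precedes it below -/
import Mathlib

section
/- Partial derivatives of the EMUS estimator (ensemble-average case): Let F ∈ ℝ^{L×L} be an irreducible row-stochastic matrix with unique probability left invariant vector z(F), let G be a group inverse of I − F, and let g, u ∈ ℝ^L be vectors with Σ_{k=1}^L z_k(F) u_k ≠ 0. Define B(F, g, u) = (Σ_{k=1}^L z_k(F) g_k)/(Σ_{k=1}^L z_k(F) u_k). Assume that for every matrix E ∈ ℝ^{L×L} whose rows each sum to zero, the map ε ↦ z(F + εE) is differentiable at ε = 0 with (d/dε)|_{ε=0} z_k(F + εE) = Σ_{i,j=1}^L z_i(F) E_{ij} G_{jk}. Then: (a) ∂B/∂g_i = z_i(F)/(Σ_k z_k(F) u_k); (b) ∂B/∂u_i = −B(F, g, u) · z_i(F)/(Σ_k z_k(F) u_k); and (c) for every E with zero row sums, (d/dε)|_{ε=0} B(F + εE, g, u) = [ Σ_{i,j=1}^L E_{ij} z_i(F) Σ_{k=1}^L G_{jk} ( g_k − B(F, g, u) u_k ) ] / ( Σ_{k=1}^L z_k(F) u_k ). -/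
/-- A matrix is irreducible if for every partition of the index set into two
nonempty sets A and B there are i ∈ A, j ∈ B with J i j ≠ 0. -/
def MatIrreducible {L : ℕ} (J : Matrix (Fin L) (Fin L) ℝ) : Prop :=
  ∀ A : Finset (Fin L), A.Nonempty → Aᶜ.Nonempty → ∃ i ∈ A, ∃ j ∈ Aᶜ, J i j ≠ 0

/-- A matrix is row-stochastic if its entries are nonnegative and each row sums to one. -/
def RowStochastic {L : ℕ} (J : Matrix (Fin L) (Fin L) ℝ) : Prop :=
  (∀ i j, 0 ≤ J i j) ∧ ∀ i, ∑ j, J i j = 1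

/-- G is a group inverse of M: MGM = M, GMG = G, MG = GM. -/
def IsGroupInverse {L : ℕ} (M G : Matrix (Fin L) (Fin L) ℝ) : Prop :=
  M * G * M = M ∧ G * M * G = G ∧ M * G = G * M

/-- **Partial derivatives of the EMUS estimator (ensemble-average case):**
with B(F, g, u) = (∑ k z k(F) g k)/(∑ k z k(F) u k), assuming the Golub–Meyer
derivative formula for z, one has
(a) ∂B/∂g i = z i(F)/(∑ z u),
(b) ∂B/∂u i = −B·z i(F)/(∑ z u), and
(c) for every E with zero row sums,
(d/dε)|₀ B(F + εE, g, u) = [∑ i j, E i j z i(F) ∑ k, G j k (g k − B u k)]/(∑ z u). -/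
theorem emus_estimator_partial_derivatives
    {L : ℕ}
    (F : Matrix (Fin L) (Fin L) ℝ)
    (hFirr : MatIrreducible F) (hFstoch : RowStochastic F)
    (zfun : Matrix (Fin L) (Fin L) ℝ → Fin L → ℝ)
    (hzinv : Matrix.vecMul (zfun F) F = zfun F)
    (hzsum : ∑ i, zfun F i = 1)
    (G : Matrix (Fin L) (Fin L) ℝ)
    (hG : IsGroupInverse (1 - F) G)
    (g u : Fin L → ℝ)
    (hu : ∑ k, zfun F k * u k ≠ 0)
    (hderiv : ∀ E : Matrix (Fin L) (Fin L) ℝ, (∀ i, ∑ j, E i j = 0) → ∀ k,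
      HasDerivAt (fun ε : ℝ => zfun (F + ε • E) k)
        (∑ i, ∑ j, zfun F i * E i j * G j k) 0)
    (B : Matrix (Fin L) (Fin L) ℝ → (Fin L → ℝ) → (Fin L → ℝ) → ℝ)
    (hB : ∀ F' g' u', B F' g' u' =
      (∑ k, zfun F' k * g' k) / (∑ k, zfun F' k * u' k)) :
    (∀ i, HasDerivAt (fun t : ℝ => B F (Function.update g i t) u)
        (zfun F i / ∑ k, zfun F k * u k) (g i)) ∧
    (∀ i, HasDerivAt (fun t : ℝ => B F g (Function.update u i t))
        (-(B F g u * (zfun F i / ∑ k, zfun F k * u k))) (u i)) ∧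
    (∀ E : Matrix (Fin L) (Fin L) ℝ, (∀ i, ∑ j, E i j = 0) →
      HasDerivAt (fun ε : ℝ => B (F + ε • E) g u)
        ((∑ i, ∑ j, E i j * (zfun F i * ∑ k, G j k * (g k - B F g u * u k))) /
          (∑ k, zfun F k * u k)) 0) := by
  have hupd : ∀ (v : Fin L → ℝ) (i : Fin L) (t : ℝ),
      (∑ k, zfun F k * Function.update v i t k)
        = zfun F i * t + ∑ k ∈ Finset.univ \ {i}, zfun F k * v k := by
    intro v i t
    rw [← Finset.sum_update_of_mem (Finset.mem_univ i)]
    refine Finset.sum_congr rfl fun k _ => ?_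
    rcases eq_or_ne k i with h | h
    · subst h; simp
    · simp [Function.update_apply, h]
  refine ⟨?_, ?_, ?_⟩
  · intro i
    set D : ℝ := ∑ k, zfun F k * u k with hD
    set C : ℝ := ∑ k ∈ Finset.univ \ {i}, zfun F k * g k with hC
    have h1 : HasDerivAt (fun t : ℝ => (zfun F i * t + C) / D) (zfun F i / D) (g i) := by
      have := (((hasDerivAt_id (g i)).const_mul (zfun F i)).add_const C).div_const D
      simpa using this
    have heq : (fun t : ℝ => B F (Function.update g i t) u)
        = fun t => (zfun F i * t + C) / D := by
      funext t; rw [hB, hupd g i t]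
    exact heq ▸ h1
  · intro i
    set D : ℝ := ∑ k, zfun F k * u k with hD
    set N : ℝ := ∑ k, zfun F k * g k with hN
    set C : ℝ := ∑ k ∈ Finset.univ \ {i}, zfun F k * u k with hC
    have hDval : zfun F i * u i + C = D := by
      have h := hupd u i (u i)
      rw [Function.update_eq_self] at h
      rw [hD, ← h]
    have h1 : HasDerivAt (fun t : ℝ => N / (zfun F i * t + C))
        ((0 * (zfun F i * u i + C) - N * (zfun F i * 1)) / (zfun F i * u i + C) ^ 2)
        (u i) := by
      exact (hasDerivAt_const (u i) N).div
        (((hasDerivAt_id (u i)).const_mul (zfun F i)).add_const C)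
        (by rw [hDval]; exact hu)
    have heq : (fun t : ℝ => B F g (Function.update u i t))
        = fun t => N / (zfun F i * t + C) := by
      funext t; rw [hB, hupd u i t]
    rw [heq, hB]
    convert h1 using 1
    rw [hDval, ← hN, ← hD]
    ring
  · intro E hE
    set D : ℝ := ∑ k, zfun F k * u k with hD
    set N : ℝ := ∑ k, zfun F k * g k with hN
    have hnum : HasDerivAt (fun ε : ℝ => ∑ k, zfun (F + ε • E) k * g k)
        (∑ k, (∑ i, ∑ j, zfun F i * E i j * G j k) * g k) 0 :=
      HasDerivAt.fun_sum fun k _ => (hderiv E hE k).mul_const (g k)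
    have hden : HasDerivAt (fun ε : ℝ => ∑ k, zfun (F + ε • E) k * u k)
        (∑ k, (∑ i, ∑ j, zfun F i * E i j * G j k) * u k) 0 :=
      HasDerivAt.fun_sum fun k _ => (hderiv E hE k).mul_const (u k)
    have hden0 : (∑ k, zfun (F + (0:ℝ) • E) k * u k) ≠ 0 := by
      simpa using hu
    have h1 := hnum.fun_div hden hden0
    have heq : (fun ε : ℝ => B (F + ε • E) g u)
        = fun ε => (∑ k, zfun (F + ε • E) k * g k) / (∑ k, zfun (F + ε • E) k * u k) := by
      funext ε; rw [hB]
    rw [heq]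
    refine h1.congr_deriv (Eq.symm ?_)
    have h0 : F + (0:ℝ) • E = F := by simp
    rw [h0]
    set N' : ℝ := ∑ k, (∑ i, ∑ j, zfun F i * E i j * G j k) * g k with hN'
    set D' : ℝ := ∑ k, (∑ i, ∑ j, zfun F i * E i j * G j k) * u k with hD'
    have key : (∑ k, (∑ i, ∑ j, zfun F i * E i j * G j k) * (g k - B F g u * u k))
        = ∑ i, ∑ j, E i j * (zfun F i * ∑ k, G j k * (g k - B F g u * u k)) := by
      simp only [Finset.sum_mul, Finset.mul_sum]
      conv_lhs => rw [Finset.sum_comm]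
      refine Finset.sum_congr rfl fun i _ => ?_
      conv_lhs => rw [Finset.sum_comm]
      exact Finset.sum_congr rfl fun j _ => Finset.sum_congr rfl fun k _ => by ring
    have hsplit : (∑ k, (∑ i, ∑ j, zfun F i * E i j * G j k) * (g k - B F g u * u k))
        = N' - B F g u * D' := by
      rw [hN', hD', Finset.mul_sum, ← Finset.sum_sub_distrib]
      exact Finset.sum_congr rfl fun k _ => by ring
    rw [← key, hsplit, hB, ← hN, ← hD]
    rw [show N / D * D' = N * D' / D from by ring, sub_div' hu, div_div, ← sq]
end

section
/- EMUS combined-average identity: Let g : X → ℝ be π-integrable. Then ⟨g⟩ := ∫ g dπ = ( Σ_{i=1}^L z_i ⟨g*⟩_i ) / ( Σ_{i=1}^L z_i ⟨1*⟩_i ), where g* = g/Σ_{k=1}^L ψ_k, 1* = 1/Σ_{k=1}^L ψ_k, and all the averages ⟨g*⟩_i and ⟨1*⟩_i are finite. -/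
open MeasureTheory

/-- **EMUS combined-average identity.**
π is a probability measure, ψ i are nonnegative measurable bias functions with
0 < ∫ ψ i dπ < ∞ and ∑ k ψ k > 0 everywhere; π i are the biased distributions
and z i the normalization constants.  For any π-integrable g, the starred averages
are finite and ⟨g⟩ = (∑ i z i ⟨g*⟩ i)/(∑ i z i ⟨1*⟩ i). -/
theorem emus_combined_average_identity
    {X : Type*} [MeasurableSpace X] (π : Measure X) [IsProbabilityMeasure π]
    {L : ℕ} (ψ : Fin L → X → ℝ)
    (hψmeas : ∀ i, Measurable (ψ i)) (hψnonneg : ∀ i x, 0 ≤ ψ i x)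
    (hψint : ∀ i, Integrable (ψ i) π) (hψpos : ∀ i, 0 < ∫ x, ψ i x ∂π)
    (hsumpos : ∀ x, 0 < ∑ k, ψ k x)
    (πb : Fin L → Measure X)
    (hπb : ∀ i, πb i = (ENNReal.ofReal (∫ x, ψ i x ∂π))⁻¹ •
      π.withDensity fun x => ENNReal.ofReal (ψ i x))
    (z : Fin L → ℝ)
    (hz : ∀ i, z i = (∫ x, ψ i x ∂π) / ∑ k, ∫ x, ψ k x ∂π)
    (g : X → ℝ) (hg : Integrable g π) :
    (∀ i, Integrable (fun x => g x / ∑ k, ψ k x) (πb i)) ∧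
    (∀ i, Integrable (fun x => 1 / ∑ k, ψ k x) (πb i)) ∧
    ∫ x, g x ∂π =
      (∑ i, z i * ∫ x, g x / ∑ k, ψ k x ∂(πb i)) /
      (∑ i, z i * ∫ x, 1 / ∑ k, ψ k x ∂(πb i)) := by
  -- X is nonempty, hence L ≠ 0
  have hX : Nonempty X := by
    rcases isEmpty_or_nonempty X with h | h
    · exfalso
      have := measure_univ (μ := π)
      simp [Set.univ_eq_empty_iff.2 h] at this
    · exact h
  obtain ⟨x₀⟩ := hX
  have hLpos : 0 < L := by
    by_contra h
    push_neg at h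
    interval_cases L
    · simpa using hsumpos x₀
  -- total normalization
  set S : ℝ := ∑ k, ∫ x, ψ k x ∂π with hS
  have hSpos : 0 < S := Finset.sum_pos (fun i _ => hψpos i)
    (Finset.univ_nonempty_iff.2 ⟨⟨0, hLpos⟩⟩)
  have hsum_meas : Measurable fun x => ∑ k, ψ k x :=
    Finset.measurable_sum Finset.univ (fun k _ => hψmeas k)
  -- key transfer lemma
  have key : ∀ (i : Fin L) (f : X → ℝ), Integrable (fun x => ψ i x * f x) π →
      Integrable f (πb i) ∧
      ∫ x, f x ∂(πb i) = (∫ x, ψ i x ∂π)⁻¹ * ∫ x, ψ i x * f x ∂π := by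
    intro i f hf
    have hci := hψpos i
    have hc0 : ENNReal.ofReal (∫ x, ψ i x ∂π) ≠ 0 := by
      simp [ENNReal.ofReal_eq_zero, not_le, hci]
    have hcinv0 : (ENNReal.ofReal (∫ x, ψ i x ∂π))⁻¹ ≠ 0 := by
      simp
    have hcinvtop : (ENNReal.ofReal (∫ x, ψ i x ∂π))⁻¹ ≠ ⊤ := by
      simp [hc0]
    have hmeas : Measurable fun x => (ψ i x).toNNReal := (hψmeas i).real_toNNReal
    have hwd : (π.withDensity fun x => ENNReal.ofReal (ψ i x)) =
        π.withDensity fun x => ((ψ i x).toNNReal : ENNReal) := rfl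
    have hiff : Integrable f (π.withDensity fun x => ENNReal.ofReal (ψ i x)) ↔
        Integrable (fun x => ψ i x * f x) π := by
      rw [hwd, integrable_withDensity_iff_integrable_smul hmeas]
      constructor <;> intro h <;> [skip; skip] <;>
      · apply h.congr
        filter_upwards with x
        simp [NNReal.smul_def, Real.coe_toNNReal _ (hψnonneg i x)]
    constructor
    · rw [hπb i, integrable_smul_measure hcinv0 hcinvtop]
      exact hiff.2 hf
    · rw [hπb i, integral_smul_measure, hwd,
        integral_withDensity_eq_integral_smul hmeas]
      have : (ENNReal.ofReal (∫ x, ψ i x ∂π))⁻¹.toReal = (∫ x, ψ i x ∂π)⁻¹ := by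
        rw [ENNReal.toReal_inv, ENNReal.toReal_ofReal hci.le]
      rw [this]
      simp only [smul_eq_mul]
      congr 1
      apply integral_congr_ae
      filter_upwards with x
      simp [NNReal.smul_def, Real.coe_toNNReal _ (hψnonneg i x)]
  -- integrability of ψ i * g*
  have hφint : ∀ i, Integrable (fun x => ψ i x * (g x / ∑ k, ψ k x)) π := by
    intro i
    apply hg.abs.mono'
    · have : AEStronglyMeasurable (fun x => ψ i x * (g x * (∑ k, ψ k x)⁻¹)) π :=
        (hψmeas i).aestronglyMeasurable.mul
          (hg.1.mul hsum_meas.inv.aestronglyMeasurable)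
      exact this.congr (by filter_upwards with x; rw [div_eq_mul_inv])
    · filter_upwards with x
      have h1 : ψ i x ≤ ∑ k, ψ k x :=
        Finset.single_le_sum (fun k _ => hψnonneg k x) (Finset.mem_univ i)
      have h2 := hsumpos x
      rw [Real.norm_eq_abs, abs_mul, abs_div, abs_of_nonneg (hψnonneg i x), abs_of_pos h2]
      rw [mul_div_assoc'] at *
      rw [div_le_iff₀ h2]
      calc ψ i x * |g x| ≤ (∑ k, ψ k x) * |g x| :=
            mul_le_mul_of_nonneg_right h1 (abs_nonneg _)
        _ = |g x| * (∑ k, ψ k x) := mul_comm _ _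
  have hφint1 : ∀ i, Integrable (fun x => ψ i x * (1 / ∑ k, ψ k x)) π := by
    intro i
    apply (integrable_const (1 : ℝ)).mono'
    · have : AEStronglyMeasurable (fun x => ψ i x * (1 * (∑ k, ψ k x)⁻¹)) π :=
        (hψmeas i).aestronglyMeasurable.mul
          (aestronglyMeasurable_const.mul hsum_meas.inv.aestronglyMeasurable)
      exact this.congr (by filter_upwards with x; rw [div_eq_mul_inv])
    · filter_upwards with x
      have h1 : ψ i x ≤ ∑ k, ψ k x :=
        Finset.single_le_sum (fun k _ => hψnonneg k x) (Finset.mem_univ i)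
      have h2 := hsumpos x
      rw [Real.norm_eq_abs, abs_mul, abs_div, abs_of_nonneg (hψnonneg i x), abs_of_pos h2, abs_one]
      rw [mul_div_assoc', mul_one, div_le_one h2]
      exact h1
  refine ⟨fun i => (key i _ (hφint i)).1, fun i => (key i _ (hφint1 i)).1, ?_⟩
  -- compute numerator and denominator
  have hzval : ∀ i, z i * (∫ x, ψ i x ∂π)⁻¹ = S⁻¹ := by
    intro i
    rw [hz i]
    field_simp [(hψpos i).ne']
  have hnum : (∑ i, z i * ∫ x, g x / ∑ k, ψ k x ∂(πb i)) = S⁻¹ * ∫ x, g x ∂π := by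
    have : ∀ i, z i * ∫ x, g x / ∑ k, ψ k x ∂(πb i)
        = S⁻¹ * ∫ x, ψ i x * (g x / ∑ k, ψ k x) ∂π := by
      intro i
      rw [(key i _ (hφint i)).2, ← mul_assoc, hzval i]
    rw [Finset.sum_congr rfl fun i _ => this i, ← Finset.mul_sum,
      ← integral_finset_sum _ (fun i _ => hφint i)]
    congr 1
    apply integral_congr_ae
    filter_upwards with x
    rw [← Finset.sum_mul, mul_div_assoc', mul_comm, mul_div_assoc,
      div_self (hsumpos x).ne', mul_one]
  have hden : (∑ i, z i * ∫ x, 1 / ∑ k, ψ k x ∂(πb i)) = S⁻¹ := by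
    have : ∀ i, z i * ∫ x, 1 / ∑ k, ψ k x ∂(πb i)
        = S⁻¹ * ∫ x, ψ i x * (1 / ∑ k, ψ k x) ∂π := by
      intro i
      rw [(key i _ (hφint1 i)).2, ← mul_assoc, hzval i]
    rw [Finset.sum_congr rfl fun i _ => this i, ← Finset.mul_sum,
      ← integral_finset_sum _ (fun i _ => hφint1 i)]
    have : ∫ x, (∑ i, ψ i x * (1 / ∑ k, ψ k x)) ∂π = 1 := by
      rw [show (fun x => ∑ i, ψ i x * (1 / ∑ k, ψ k x)) = fun _ => (1:ℝ) from ?_]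
      · simp
      · funext x
        rw [← Finset.sum_mul, mul_one_div, div_self (hsumpos x).ne']
    rw [this, mul_one]
  rw [hnum, hden, mul_comm, mul_div_assoc, div_self (inv_ne_zero hSpos.ne'), mul_one]
end

section
/- The vector of normalization constants is a left eigenvector of the overlap matrix with eigenvalue one: with z_i = (∫ ψ_i dπ)/(Σ_{k=1}^L ∫ ψ_k dπ) and F_ij = ⟨ψ_j*⟩_i, one has z_j = Σ_{i=1}^L z_i F_ij for every j = 1,…,L, and Σ_{i=1}^L z_i = 1. -/
open MeasureTheory

/-- **The vector of normalization constants is a left eigenvector of the overlap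
matrix with eigenvalue one:** with z i = (∫ ψ i dπ)/(∑ k ∫ ψ k dπ) and
F i j = ⟨ψ j*⟩ i, one has z j = ∑ i, z i * F i j for every j, and ∑ i, z i = 1. -/
theorem emus_z_is_left_eigenvector
    {X : Type*} [MeasurableSpace X] (π : Measure X) [IsProbabilityMeasure π]
    {L : ℕ} (ψ : Fin L → X → ℝ)
    (hψmeas : ∀ i, Measurable (ψ i)) (hψnonneg : ∀ i x, 0 ≤ ψ i x)
    (hψint : ∀ i, Integrable (ψ i) π) (hψpos : ∀ i, 0 < ∫ x, ψ i x ∂π)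
    (hsumpos : ∀ x, 0 < ∑ k, ψ k x)
    (πb : Fin L → Measure X)
    (hπb : ∀ i, πb i = (ENNReal.ofReal (∫ x, ψ i x ∂π))⁻¹ •
      π.withDensity fun x => ENNReal.ofReal (ψ i x))
    (z : Fin L → ℝ)
    (hz : ∀ i, z i = (∫ x, ψ i x ∂π) / ∑ k, ∫ x, ψ k x ∂π)
    (F : Matrix (Fin L) (Fin L) ℝ)
    (hF : ∀ i j, F i j = ∫ x, ψ j x / ∑ k, ψ k x ∂(πb i)) :
    (∀ j, ∑ i, z i * F i j = z j) ∧ ∑ i, z i = 1 := by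
  have hXne : Nonempty X := by
    by_contra h
    have h0 : (Set.univ : Set X) = ∅ := by
      ext x; exact absurd ⟨x⟩ h
    have := measure_univ (μ := π)
    rw [h0] at this
    simp at this
  obtain ⟨x₀⟩ := hXne
  have hLne : Nonempty (Fin L) := by
    by_contra h
    rw [not_nonempty_iff] at h
    have := hsumpos x₀
    simp at this
  have hD : 0 < ∑ k, ∫ x, ψ k x ∂π :=
    Finset.sum_pos (fun k _ => hψpos k) Finset.univ_nonempty
  constructor
  · intro j
    -- bound : ψ j x / ∑ k, ψ k x ≤ 1
    have hle : ∀ x, ψ j x / ∑ k, ψ k x ≤ 1 := fun x =>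
      (div_le_one (hsumpos x)).2 (Finset.single_le_sum (fun k _ => hψnonneg k x)
        (Finset.mem_univ j))
    have hnn : ∀ x, 0 ≤ ψ j x / ∑ k, ψ k x := fun x =>
      div_nonneg (hψnonneg j x) (hsumpos x).le
    have hmeasdiv : Measurable fun x => ψ j x / ∑ k, ψ k x :=
      (hψmeas j).div (Finset.measurable_sum _ fun k _ => hψmeas k)
    have hint : ∀ i, Integrable (fun x => ψ i x * (ψ j x / ∑ k, ψ k x)) π := by
      intro i
      refine (hψint i).mono ((hψmeas i).mul hmeasdiv).aestronglyMeasurable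
        (Filter.Eventually.of_forall fun x => ?_)
      rw [Real.norm_eq_abs, Real.norm_eq_abs, abs_of_nonneg (hψnonneg i x),
        abs_of_nonneg (mul_nonneg (hψnonneg i x) (hnn x))]
      calc ψ i x * (ψ j x / ∑ k, ψ k x) ≤ ψ i x * 1 :=
            mul_le_mul_of_nonneg_left (hle x) (hψnonneg i x)
        _ = ψ i x := mul_one _
    have key : ∀ i, F i j = (∫ x, ψ i x ∂π)⁻¹ *
        ∫ x, ψ i x * (ψ j x / ∑ k, ψ k x) ∂π := by
      intro i
      rw [hF, hπb, integral_smul_measure]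
      have h1 : ((ENNReal.ofReal (∫ x, ψ i x ∂π))⁻¹).toReal
          = (∫ x, ψ i x ∂π)⁻¹ := by
        rw [ENNReal.toReal_inv, ENNReal.toReal_ofReal (hψpos i).le]
      rw [h1]
      have h2 : (∫ x, ψ j x / ∑ k, ψ k x
            ∂π.withDensity fun x => ENNReal.ofReal (ψ i x))
          = ∫ x, ψ i x * (ψ j x / ∑ k, ψ k x) ∂π := by
        have hfm : Measurable fun x => (ψ i x).toNNReal :=
          measurable_real_toNNReal.comp (hψmeas i)
        have h3 : (fun x => ENNReal.ofReal (ψ i x))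
            = fun x => ((ψ i x).toNNReal : ENNReal) := rfl
        rw [h3, integral_withDensity_eq_integral_smul hfm]
        refine integral_congr_ae (Filter.Eventually.of_forall fun x => ?_)
        simp [NNReal.smul_def, Real.coe_toNNReal _ (hψnonneg i x)]
      rw [h2, smul_eq_mul]
    have hsum : ∑ i, z i * F i j
        = (∑ k, ∫ x, ψ k x ∂π)⁻¹ * ∑ i, ∫ x, ψ i x * (ψ j x / ∑ k, ψ k x) ∂π := by
      rw [Finset.mul_sum]
      refine Finset.sum_congr rfl fun i _ => ?_
      rw [key i, hz, div_eq_mul_inv]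
      field_simp [(hψpos i).ne']
    rw [hsum, ← integral_finset_sum _ fun i _ => hint i]
    have heq : (fun x => ∑ i, ψ i x * (ψ j x / ∑ k, ψ k x)) = fun x => ψ j x := by
      funext x
      rw [← Finset.sum_mul, ← mul_div_assoc, mul_comm, mul_div_assoc,
        div_self (hsumpos x).ne', mul_one]
    rw [heq, hz, div_eq_mul_inv, mul_comm]
  · simp only [hz]
    rw [← Finset.sum_div, div_self hD.ne']
end

section
/- MBAR family of identities: For each pair (i, j) with 1 ≤ i, j ≤ L, let β_ij : X → ℝ be measurable with ∫ |β_ij| ψ_i ψ_j dπ < ∞. Then for every j = 1,…,L, z_j · Σ_{i=1}^L ⟨β_ij ψ_i⟩_j = Σ_{i=1}^L z_i ⟨β_ij ψ_j⟩_i. -/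
open MeasureTheory
open scoped NNReal ENNReal

/-- **MBAR family of identities:** for measurable β i j with
∫ |β i j| ψ i ψ j dπ < ∞, for every j:
z j * ∑ i, ⟨β i j * ψ i⟩ j = ∑ i, z i * ⟨β i j * ψ j⟩ i. -/
theorem mbar_family_of_identities
    {X : Type*} [MeasurableSpace X] (π : Measure X) [IsProbabilityMeasure π]
    {L : ℕ} (ψ : Fin L → X → ℝ)
    (hψmeas : ∀ i, Measurable (ψ i)) (hψnonneg : ∀ i x, 0 ≤ ψ i x)
    (hψint : ∀ i, Integrable (ψ i) π) (hψpos : ∀ i, 0 < ∫ x, ψ i x ∂π)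
    (hsumpos : ∀ x, 0 < ∑ k, ψ k x)
    (πb : Fin L → Measure X)
    (hπb : ∀ i, πb i = (ENNReal.ofReal (∫ x, ψ i x ∂π))⁻¹ •
      π.withDensity fun x => ENNReal.ofReal (ψ i x))
    (z : Fin L → ℝ)
    (hz : ∀ i, z i = (∫ x, ψ i x ∂π) / ∑ k, ∫ x, ψ k x ∂π)
    (β : Fin L → Fin L → X → ℝ)
    (hβmeas : ∀ i j, Measurable (β i j))
    (hβint : ∀ i j, Integrable (fun x => β i j x * ψ i x * ψ j x) π) :
    ∀ j, z j * ∑ i, ∫ x, β i j x * ψ i x ∂(πb j) =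
      ∑ i, z i * ∫ x, β i j x * ψ j x ∂(πb i) := by
  intro j
  have hS : 0 < ∑ k, ∫ x, ψ k x ∂π :=
    Finset.sum_pos (fun k _ => hψpos k) ⟨j, Finset.mem_univ j⟩
  have key : ∀ (i : Fin L) (f : X → ℝ),
      ∫ x, f x ∂(πb i) = (∫ x, ψ i x ∂π)⁻¹ * ∫ x, ψ i x * f x ∂π := by
    intro i f
    rw [hπb i, integral_smul_measure]
    have hd : (fun x => ENNReal.ofReal (ψ i x)) =
        fun x => (Real.toNNReal (ψ i x) : ℝ≥0∞) := rfl
    rw [hd, integral_withDensity_eq_integral_smul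
      ((hψmeas i).real_toNNReal) f]
    have h1 : (∫ x, (Real.toNNReal (ψ i x)) • f x ∂π) = ∫ x, ψ i x * f x ∂π := by
      refine integral_congr_ae (Filter.Eventually.of_forall fun x => ?_)
      simp [NNReal.smul_def, Real.coe_toNNReal _ (hψnonneg i x)]
    rw [h1, ENNReal.toReal_inv, ENNReal.toReal_ofReal (hψpos i).le, smul_eq_mul]
  rw [Finset.mul_sum]
  refine Finset.sum_congr rfl fun i _ => ?_
  rw [key j (fun x => β i j x * ψ i x), key i (fun x => β i j x * ψ j x)]
  have hEq : (∫ x, ψ j x * (β i j x * ψ i x) ∂π) =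
      ∫ x, ψ i x * (β i j x * ψ j x) ∂π := by
    refine integral_congr_ae (Filter.Eventually.of_forall fun x => ?_)
    ring
  rw [hEq, hz i, hz j]
  have ha := (hψpos i).ne'
  have hb := (hψpos j).ne'
  have hs := hS.ne'
  field_simp
end

section
/- Well-posedness of each step of the MBAR/iterative-EMUS eigenproblem: In the setting where F̄_ij(w) = (1/N_i) Σ_{t=0}^{N_i−1} [ ψ_j(x_t^i) n_i / w_i ] / [ Σ_{k=1}^L ψ_k(x_t^i) n_k / w_k ] for positive vectors w, the following hold: (a) if F̄(w₀) is irreducible for one vector w₀ with positive entries, then F̄(w) is irreducible for every vector w with positive entries; (b) for every such w, there is exactly one vector z with zᵀ F̄(w) = zᵀ and Σ_{i=1}^L z_i = 1, and this z has all entries positive. -/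
section PF
variable {L : ℕ} (F : Matrix (Fin L) (Fin L) ℝ)

lemma pf_supp_pos (hF : ∀ i j, 0 ≤ F i j) (hirr : MatIrreducible F)
    (z : Fin L → ℝ) (hz : Matrix.vecMul z F = z)
    (hz0 : ∀ i, 0 ≤ z i) (hne : z ≠ 0) : ∀ i, 0 < z i := by
  classical
  set A : Finset (Fin L) := Finset.univ.filter (fun i => z i ≠ 0) with hA
  have hAne : A.Nonempty := by
    obtain ⟨i, hi⟩ := Function.ne_iff.mp hne
    exact ⟨i, by simpa [hA] using hi⟩
  by_cases hAc : Aᶜ.Nonempty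
  · obtain ⟨i, hi, j, hj, hij⟩ := hirr A hAne hAc
    have hzj : z j = 0 := by
      have := Finset.mem_compl.mp hj
      simpa [hA] using this
    have hsum : ∑ k, z k * F k j = 0 := by
      have := congrFun hz j
      simpa [Matrix.vecMul, dotProduct, hzj] using this
    have hterm : z i * F i j = 0 := by
      exact (Finset.sum_eq_zero_iff_of_nonneg (fun k _ =>
        mul_nonneg (hz0 k) (hF k j))).mp hsum i (Finset.mem_univ i)
    have hzi : z i ≠ 0 := by simpa [hA] using hi
    rcases mul_eq_zero.mp hterm with h | h
    · exact absurd h hzi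
    · exact absurd h hij
  · intro i
    have hi : i ∈ A := by
      by_contra h
      exact hAc ⟨i, Finset.mem_compl.mpr h⟩
    have : z i ≠ 0 := by simpa [hA] using hi
    exact lt_of_le_of_ne (hz0 i) (Ne.symm this)

lemma pf_abs_stat (hF : ∀ i j, 0 ≤ F i j) (v : Fin L → ℝ) (hv : ∀ i, 0 < v i)
    (hFv : F.mulVec v = v) (z : Fin L → ℝ) (hz : Matrix.vecMul z F = z) :
    Matrix.vecMul (fun i => |z i|) F = (fun i => |z i|) := by
  classical
  set u : Fin L → ℝ := fun i => |z i| with hu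
  have h1 : ∀ j, u j ≤ Matrix.vecMul u F j := by
    intro j
    have : |z j| = |∑ i, z i * F i j| := by
      have := congrFun hz j
      rw [← this]; simp [Matrix.vecMul, dotProduct]
    calc u j = |∑ i, z i * F i j| := this
      _ ≤ ∑ i, |z i * F i j| := Finset.abs_sum_le_sum_abs _ _
      _ = ∑ i, u i * F i j := by
          refine Finset.sum_congr rfl fun i _ => ?_
          rw [abs_mul, abs_of_nonneg (hF i j)]
      _ = Matrix.vecMul u F j := by simp [Matrix.vecMul, dotProduct]
  have h2 : ∑ j, (Matrix.vecMul u F j) * v j = ∑ j, u j * v j := by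
    have key : ∀ i, ∑ j, F i j * v j = v i := fun i => by
      have := congrFun hFv i
      simpa [Matrix.mulVec, dotProduct] using this
    calc ∑ j, (Matrix.vecMul u F j) * v j
        = ∑ j, ∑ i, u i * F i j * v j := by
          simp [Matrix.vecMul, dotProduct, Finset.sum_mul]
      _ = ∑ i, ∑ j, u i * F i j * v j := Finset.sum_comm
      _ = ∑ i, u i * v i := by
          refine Finset.sum_congr rfl fun i _ => ?_
          rw [← key i, Finset.mul_sum]
          exact Finset.sum_congr rfl fun j _ => by ring
  have h3 : ∑ j, (Matrix.vecMul u F j - u j) * v j = 0 := by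
    simp only [sub_mul, Finset.sum_sub_distrib, h2, sub_self]
  have h4 : ∀ j ∈ Finset.univ, (Matrix.vecMul u F j - u j) * v j = 0 :=
    (Finset.sum_eq_zero_iff_of_nonneg (fun j _ =>
      mul_nonneg (sub_nonneg.mpr (h1 j)) (hv j).le)).mp h3
  funext j
  have := h4 j (Finset.mem_univ j)
  rcases mul_eq_zero.mp this with h | h
  · linarith [sub_eq_zero.mp h]
  · exact absurd h (hv j).ne'

lemma pf_sign (hF : ∀ i j, 0 ≤ F i j) (hirr : MatIrreducible F)
    (v : Fin L → ℝ) (hv : ∀ i, 0 < v i) (hFv : F.mulVec v = v)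
    (z : Fin L → ℝ) (hz : Matrix.vecMul z F = z) (hne : z ≠ 0) :
    (∀ i, 0 < z i) ∨ (∀ i, z i < 0) := by
  classical
  have habs := pf_abs_stat F hF v hv hFv z hz
  set s : Fin L → ℝ := fun i => |z i| - z i with hs
  have hss : Matrix.vecMul s F = s := by
    funext j
    have h1 := congrFun habs j
    have h2 := congrFun hz j
    simp only [hs, Matrix.vecMul, dotProduct] at h1 h2 ⊢
    simp only [sub_mul, Finset.sum_sub_distrib, h1, h2]
  by_cases hs0 : s = 0
  · left
    have hzabs : ∀ i, z i = |z i| := fun i => by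
      have := congrFun hs0 i; simp [hs] at this; linarith
    exact pf_supp_pos F hF hirr z hz (fun i => (hzabs i) ▸ abs_nonneg _) hne
  · right
    have hpos := pf_supp_pos F hF hirr s hss
      (fun i => sub_nonneg.mpr (le_abs_self _)) hs0
    intro i
    have h := hpos i
    simp only [hs] at h
    rcases abs_cases (z i) with ⟨he, _⟩ | ⟨he, hlt⟩
    · rw [he] at h; linarith
    · linarith

lemma pf_main (hL : 0 < L) (hF : ∀ i j, 0 ≤ F i j) (hirr : MatIrreducible F)
    (v : Fin L → ℝ) (hv : ∀ i, 0 < v i) (hFv : F.mulVec v = v) :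
    (∃! z : Fin L → ℝ, Matrix.vecMul z F = z ∧ ∑ i, z i = 1) ∧
    (∀ z : Fin L → ℝ, Matrix.vecMul z F = z → ∑ i, z i = 1 → ∀ i, 0 < z i) := by
  classical
  haveI : Nonempty (Fin L) := ⟨⟨0, hL⟩⟩
  -- sums of stationary nonzero vectors are nonzero
  have hsum_ne : ∀ z : Fin L → ℝ, Matrix.vecMul z F = z → z ≠ 0 → ∑ i, z i ≠ 0 := by
    intro z hz hne
    rcases pf_sign F hF hirr v hv hFv z hz hne with h | h
    · exact (Finset.sum_pos (fun i _ => h i) Finset.univ_nonempty).ne'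
    · have : ∑ i, z i < 0 := Finset.sum_neg (fun i _ => h i) Finset.univ_nonempty
      exact this.ne
  -- existence of a nonzero stationary vector
  have hdet : (F - 1).det = 0 := by
    rw [← Matrix.exists_mulVec_eq_zero_iff]
    refine ⟨v, fun h => (hv ⟨0, hL⟩).ne' (congrFun h ⟨0, hL⟩), ?_⟩
    rw [Matrix.sub_mulVec, hFv, Matrix.one_mulVec, sub_self]
  obtain ⟨z₀, hz₀ne, hz₀⟩ := Matrix.exists_vecMul_eq_zero_iff.mpr hdet
  have hz₀stat : Matrix.vecMul z₀ F = z₀ := by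
    have : Matrix.vecMul z₀ F - Matrix.vecMul z₀ 1 = 0 := by
      rw [← Matrix.vecMul_sub]; exact hz₀
    rw [Matrix.vecMul_one] at this
    exact sub_eq_zero.mp this
  set c : ℝ := ∑ i, z₀ i with hc
  have hcne : c ≠ 0 := hsum_ne z₀ hz₀stat hz₀ne
  set z : Fin L → ℝ := fun i => z₀ i / c with hzdef
  have hzstat : Matrix.vecMul z F = z := by
    funext j
    have := congrFun hz₀stat j
    simp only [hzdef, Matrix.vecMul, dotProduct] at this ⊢
    rw [← this, Finset.sum_div]
    exact Finset.sum_congr rfl fun i _ => by ring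
  have hzsum : ∑ i, z i = 1 := by
    simp only [hzdef, ← Finset.sum_div]
    exact div_self hcne
  -- positivity of any normalized stationary vector
  have hpos : ∀ z : Fin L → ℝ, Matrix.vecMul z F = z → ∑ i, z i = 1 → ∀ i, 0 < z i := by
    intro y hy hysum
    have hyne : y ≠ 0 := by
      intro h; rw [h] at hysum; simp at hysum
    rcases pf_sign F hF hirr v hv hFv y hy hyne with h | h
    · exact h
    · exfalso
      have : ∑ i, y i < 0 := Finset.sum_neg (fun i _ => h i) Finset.univ_nonempty
      linarith
  refine ⟨⟨z, ⟨hzstat, hzsum⟩, ?_⟩, hpos⟩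
  rintro y ⟨hy, hysum⟩
  by_contra hne
  have hune : y - z ≠ 0 := sub_ne_zero.mpr hne
  have hustat : Matrix.vecMul (y - z) F = y - z := by
    rw [Matrix.sub_vecMul, hy, hzstat]
  have := hsum_ne (y - z) hustat hune
  apply this
  simp only [Pi.sub_apply, Finset.sum_sub_distrib, hysum, hzsum, sub_self]

end PF

/-- **Well-posedness of each step of the MBAR/iterative-EMUS eigenproblem:**
(a) if F̄(w₀) is irreducible for one positive w₀, then F̄(w) is irreducible for every
positive w; (b) for every such w there is exactly one z with zᵀ F̄(w) = zᵀ and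
∑ z i = 1, and this z has positive entries. -/
theorem mbar_iteration_eigenproblem_wellposed
    {X : Type*} {L : ℕ} (hL : 0 < L)
    (ψ : Fin L → X → ℝ) (hψnonneg : ∀ i x, 0 ≤ ψ i x)
    (hsumpos : ∀ x, 0 < ∑ k, ψ k x)
    (Nn : Fin L → ℕ) (hNn : ∀ i, 0 < Nn i)
    (xs : (i : Fin L) → Fin (Nn i) → X)
    (n : Fin L → ℝ) (hn : ∀ i, 0 < n i)
    (Fbar : (Fin L → ℝ) → Matrix (Fin L) (Fin L) ℝ)
    (hFbar : ∀ w i j, Fbar w i j = (1 / (Nn i : ℝ)) * ∑ t : Fin (Nn i),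
      (ψ j (xs i t) * n i / w i) / ∑ k, ψ k (xs i t) * n k / w k)
    (w₀ : Fin L → ℝ) (hw₀ : ∀ i, 0 < w₀ i)
    (hirr₀ : MatIrreducible (Fbar w₀)) :
    ∀ w : Fin L → ℝ, (∀ i, 0 < w i) →
      MatIrreducible (Fbar w) ∧
      (∃! z : Fin L → ℝ, Matrix.vecMul z (Fbar w) = z ∧ ∑ i, z i = 1) ∧
      (∀ z : Fin L → ℝ, Matrix.vecMul z (Fbar w) = z → ∑ i, z i = 1 → ∀ i, 0 < z i) := by
  classical
  -- positivity of the denominator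
  have hD : ∀ (w : Fin L → ℝ), (∀ i, 0 < w i) → ∀ x : X,
      0 < ∑ k, ψ k x * n k / w k := by
    intro w hw x
    obtain ⟨k, hk⟩ : ∃ k, 0 < ψ k x := by
      by_contra h
      push_neg at h
      have : ∑ k, ψ k x ≤ 0 := Finset.sum_nonpos (fun k _ => h k)
      linarith [hsumpos x]
    refine Finset.sum_pos' (fun k _ => ?_) ⟨k, Finset.mem_univ k, ?_⟩
    · exact div_nonneg (mul_nonneg (hψnonneg k x) (hn k).le) (hw k).le
    · exact div_pos (mul_pos hk (hn k)) (hw k)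
  -- each summand is nonnegative
  have hterm_nonneg : ∀ (w : Fin L → ℝ), (∀ i, 0 < w i) → ∀ (i j : Fin L) (t : Fin (Nn i)),
      0 ≤ (ψ j (xs i t) * n i / w i) / ∑ k, ψ k (xs i t) * n k / w k := by
    intro w hw i j t
    exact div_nonneg (div_nonneg (mul_nonneg (hψnonneg j _) (hn i).le) (hw i).le)
      (hD w hw _).le
  -- nonnegativity of entries
  have hFnonneg : ∀ (w : Fin L → ℝ), (∀ i, 0 < w i) → ∀ i j, 0 ≤ Fbar w i j := by
    intro w hw i j
    rw [hFbar]
    exact mul_nonneg (by positivity) (Finset.sum_nonneg fun t _ => hterm_nonneg w hw i j t)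
  -- characterization of nonzero entries, independent of w
  have hentry : ∀ (w : Fin L → ℝ), (∀ i, 0 < w i) → ∀ i j,
      (Fbar w i j ≠ 0 ↔ ∃ t : Fin (Nn i), ψ j (xs i t) ≠ 0) := by
    intro w hw i j
    rw [hFbar]
    have hNi : (0 : ℝ) < (Nn i : ℝ) := Nat.cast_pos.mpr (hNn i)
    constructor
    · intro h
      by_contra hc
      push_neg at hc
      apply h
      have : ∀ t : Fin (Nn i),
          (ψ j (xs i t) * n i / w i) / (∑ k, ψ k (xs i t) * n k / w k) = 0 := by
        intro t; rw [hc t]; simp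
      rw [Finset.sum_congr rfl (fun t _ => this t)]
      simp
    · rintro ⟨t, ht⟩
      have htpos : 0 < (ψ j (xs i t) * n i / w i) / ∑ k, ψ k (xs i t) * n k / w k := by
        refine div_pos (div_pos (mul_pos ?_ (hn i)) (hw i)) (hD w hw _)
        exact lt_of_le_of_ne (hψnonneg j _) (Ne.symm ht)
      have hsum : 0 < ∑ t : Fin (Nn i),
          (ψ j (xs i t) * n i / w i) / ∑ k, ψ k (xs i t) * n k / w k :=
        Finset.sum_pos' (fun t _ => hterm_nonneg w hw i j t) ⟨t, Finset.mem_univ t, htpos⟩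
      positivity
  intro w hw
  -- irreducibility transfers from w₀ to w
  have hirr : MatIrreducible (Fbar w) := by
    intro A hA hAc
    obtain ⟨i, hi, j, hj, hij⟩ := hirr₀ A hA hAc
    exact ⟨i, hi, j, hj, (hentry w hw i j).mpr ((hentry w₀ hw₀ i j).mp hij)⟩
  -- the positive right eigenvector
  set v : Fin L → ℝ := fun i => n i / w i with hvdef
  have hv : ∀ i, 0 < v i := fun i => div_pos (hn i) (hw i)
  have hFv : (Fbar w).mulVec v = v := by
    funext i
    have hNi : ((Nn i : ℝ)) ≠ 0 := Nat.cast_ne_zero.mpr (hNn i).ne'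
    simp only [Matrix.mulVec, dotProduct]
    have step1 : ∀ j, Fbar w i j * v j = (1 / (Nn i : ℝ)) * ∑ t : Fin (Nn i),
        (ψ j (xs i t) * n j / w j) * (n i / w i) / ∑ k, ψ k (xs i t) * n k / w k := by
      intro j
      rw [hFbar, mul_assoc, Finset.sum_mul]
      congr 1
      refine Finset.sum_congr rfl fun t _ => ?_
      simp only [hvdef]
      ring
    rw [Finset.sum_congr rfl (fun j _ => step1 j), ← Finset.mul_sum, Finset.sum_comm]
    have step2 : ∀ t : Fin (Nn i), ∑ j, (ψ j (xs i t) * n j / w j) * (n i / w i) /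
        (∑ k, ψ k (xs i t) * n k / w k) = n i / w i := by
      intro t
      have hDt := hD w hw (xs i t)
      rw [← Finset.sum_div, ← Finset.sum_mul, mul_comm, mul_div_assoc,
        div_self hDt.ne', mul_one]
    rw [Finset.sum_congr rfl (fun t _ => step2 t)]
    simp only [Finset.sum_const, Finset.card_univ, Fintype.card_fin, nsmul_eq_mul]
    show (1 / (Nn i : ℝ)) * ((Nn i : ℝ) * (n i / w i)) = v i
    rw [hvdef, one_div, inv_mul_cancel_left₀ hNi]
  exact ⟨hirr, pf_main (Fbar w) hL (hFnonneg w hw) hirr v hv hFv⟩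
end

section
/- Low-temperature variance bound for umbrella sampling: Let k_BT > 0, K > 0, Ω > 0, γ > 0, W'_max > 0, N_min > 0 be constants. Let L ≥ 1, N > 0 with N_i = N/L ≥ N_min for each i, and let ΔW_1, …, ΔW_L ≥ 0 satisfy ΔW_i ≤ W'_max γ / L. Assume L = W'_max/(Ω k_BT). Let Y_1, …, Y_L be independent real-valued square-integrable random variables with Var(Y_i) ≤ (K/(k_BT · N_i · L²)) exp(ΔW_i/(k_BT)) for every i. Then ΔGˉ = k_BT Σ_{i=1}^L s_i Y_i, for any signs s_i ∈ {−1, +1}, satisfies Var(ΔGˉ) ≤ K W'_max exp(Ωγ)/(Ω N_min). In particular, the bound is independent of the temperature k_BT. -/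
open MeasureTheory ProbabilityTheory

/-- **Low-temperature variance bound for umbrella sampling:** with L = W'_max/(Ω k_BT)
windows, per-window free-energy variations ΔW i ≤ W'_max γ/L, and Arrhenius-type
per-window variance bounds Var(Y i) ≤ (K/(k_BT N_i L²)) exp(ΔW i/k_BT), any signed sum
ΔḠ = k_BT ∑ i s i Y i of the independent window variables satisfies
Var(ΔḠ) ≤ K W'_max exp(Ωγ)/(Ω N_min), a bound independent of the temperature. -/
theorem umbrella_low_temperature_variance_bound
    {Ω' : Type*} [MeasurableSpace Ω'] (P : Measure Ω') [IsProbabilityMeasure P]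
    (kBT K Om γ Wmax Nmin : ℝ)
    (hkBT : 0 < kBT) (hK : 0 < K) (hOm : 0 < Om) (hγ : 0 < γ)
    (hWmax : 0 < Wmax) (hNmin : 0 < Nmin)
    {L : ℕ} (hL : 1 ≤ L)
    (N : ℝ) (hN : 0 < N) (Ni : ℝ) (hNi : Ni = N / L) (hNimin : Nmin ≤ Ni)
    (ΔW : Fin L → ℝ) (hΔWnonneg : ∀ i, 0 ≤ ΔW i)
    (hΔW : ∀ i, ΔW i ≤ Wmax * γ / L)
    (hLeq : (L : ℝ) = Wmax / (Om * kBT))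
    (Y : Fin L → Ω' → ℝ)
    (hmeas : ∀ i, Measurable (Y i))
    (hsq : ∀ i, MemLp (Y i) 2 P)
    (hindep : iIndepFun Y P)
    (hvar : ∀ i, variance (Y i) P ≤ K / (kBT * Ni * L ^ 2) * Real.exp (ΔW i / kBT))
    (s : Fin L → ℝ) (hs : ∀ i, s i = 1 ∨ s i = -1) :
    variance (fun ω => kBT * ∑ i, s i * Y i ω) P ≤
      K * Wmax * Real.exp (Om * γ) / (Om * Nmin) := by
  have hLpos : (0:ℝ) < L := by positivity
  have hNipos : 0 < Ni := lt_of_lt_of_le hNmin hNimin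
  -- rewrite as kBT * (sum function)
  have hrw : (fun ω => kBT * ∑ i, s i * Y i ω)
      = fun ω => kBT * (∑ i, (fun ω => s i * Y i ω)) ω := by
    funext ω; simp
  rw [hrw, variance_const_mul]
  -- variance of sum is sum of variances
  have hsq' : ∀ i ∈ Finset.univ, MemLp (fun ω => s i * Y i ω) 2 P := by
    intro i _
    exact (hsq i).const_mul (s i)
  have hpair : Set.Pairwise ↑(Finset.univ : Finset (Fin L))
      fun i j => IndepFun (fun ω => s i * Y i ω) (fun ω => s j * Y j ω) P := by
    intro i _ j _ hij
    exact (hindep.indepFun hij).comp (measurable_const_mul (s i)) (measurable_const_mul (s j))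
  rw [ProbabilityTheory.IndepFun.variance_sum hsq' hpair]
  -- each term
  have hL' : (L:ℝ) * kBT = Wmax / Om := by
    rw [hLeq]; field_simp
  have hterm : ∀ i, variance (fun ω => s i * Y i ω) P
      ≤ K / (kBT * Ni * L ^ 2) * Real.exp (Om * γ) := by
    intro i
    rw [variance_const_mul]
    have hsi : s i ^ 2 = 1 := by rcases hs i with h | h <;> rw [h] <;> ring
    rw [hsi, one_mul]
    refine le_trans (hvar i) ?_
    apply mul_le_mul_of_nonneg_left _ (by positivity)
    apply Real.exp_le_exp.2
    rw [div_le_iff₀ hkBT]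
    calc ΔW i ≤ Wmax * γ / L := hΔW i
      _ = Om * γ * kBT := by
          rw [div_eq_iff (ne_of_gt hLpos)]
          have : Wmax = Om * ((L:ℝ) * kBT) := by rw [hL']; field_simp
          rw [this]; ring
  calc kBT ^ 2 * ∑ i, variance (fun ω => s i * Y i ω) P
      ≤ kBT ^ 2 * ∑ _i : Fin L, K / (kBT * Ni * L ^ 2) * Real.exp (Om * γ) := by
        apply mul_le_mul_of_nonneg_left (Finset.sum_le_sum fun i _ => hterm i) (by positivity)
    _ = K * Wmax * Real.exp (Om * γ) / (Om * Ni * L^2) := by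
        rw [Finset.sum_const, Finset.card_univ, Fintype.card_fin, nsmul_eq_mul]
        have hWmax' : Wmax = Om * ((L:ℝ) * kBT) := by rw [hL']; field_simp
        rw [hWmax']
        field_simp
    _ ≤ K * Wmax * Real.exp (Om * γ) / (Om * Nmin) := by
        apply div_le_div_of_nonneg_left (by positivity) (by positivity)
        calc Om * Nmin ≤ Om * Ni := by
              apply mul_le_mul_of_nonneg_left hNimin hOm.le
          _ = Om * Ni * 1 := by ring
          _ ≤ Om * Ni * L^2 := by
              apply mul_le_mul_of_nonneg_left _ (by positivity)
              have : (1:ℝ) ≤ (L:ℝ) := by exact_mod_cast hL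
              nlinarith
end

section
/- Derivative of the invariant vector of a stochastic matrix (Golub–Meyer identity): Let F ∈ ℝ^{L×L} be an irreducible row-stochastic matrix with unique probability left invariant vector z(F). Then I − F has a group inverse (I − F)^#, and for every matrix E ∈ ℝ^{L×L} whose rows each sum to zero and such that F + εE is row-stochastic for all sufficiently small ε > 0, the map ε ↦ z(F + εE) is differentiable at ε = 0 with (d/dε)|_{ε=0} z_k(F + εE) = z(F)ᵀ E (I − F)^# e_k = Σ_{i,j=1}^L z_i(F) E_{ij} (I − F)^#_{jk}; equivalently, ∂z_k/∂F_ij = z_i(F) (I − F)^#_{jk}. -/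
open Filter

/-- A vector fixed by an irreducible row-stochastic matrix is constant. -/
lemma gm_const_of_fixed {L : ℕ} {F : Matrix (Fin L) (Fin L) ℝ}
    (hirr : MatIrreducible F) (hst : RowStochastic F)
    {x : Fin L → ℝ} (hx : F.mulVec x = x) : ∀ i j, x i = x j := by
  intro i0 j0
  have hne : (Finset.univ : Finset (Fin L)).Nonempty := ⟨i0, Finset.mem_univ i0⟩
  set m := Finset.univ.sup' hne x with hm
  set B : Finset (Fin L) := Finset.univ.filter (fun a => x a = m) with hB
  have hBne : B.Nonempty := by
    obtain ⟨a, _, ha⟩ := Finset.exists_mem_eq_sup' hne x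
    exact ⟨a, by simp [hB, ha.symm, hm]⟩
  have hall : ∀ a, x a = m := by
    by_contra hcon
    push_neg at hcon
    obtain ⟨a, ha⟩ := hcon
    have hBc : Bᶜ.Nonempty := ⟨a, by simp [hB, ha]⟩
    obtain ⟨i, hi, j, hj, hij⟩ := hirr B hBne hBc
    have hxi : x i = m := by simpa [hB] using hi
    have hxj : x j < m := by
      have h1 : x j ≤ m := Finset.le_sup' x (Finset.mem_univ j)
      have h2 : x j ≠ m := by simpa [hB] using hj
      exact lt_of_le_of_ne h1 h2
    have hFij : 0 < F i j := lt_of_le_of_ne (hst.1 i j) (Ne.symm hij)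
    have hlt : ∑ k, F i k * x k < ∑ k, F i k * m := by
      refine Finset.sum_lt_sum (fun k _ => ?_) ⟨j, Finset.mem_univ j, ?_⟩
      · exact mul_le_mul_of_nonneg_left (Finset.le_sup' x (Finset.mem_univ k)) (hst.1 i k)
      · exact mul_lt_mul_of_pos_left hxj hFij
    have hsum : ∑ k, F i k * m = m := by
      rw [← Finset.sum_mul, hst.2 i, one_mul]
    have hxi' : ∑ k, F i k * x k = x i := by
      simpa [Matrix.mulVec, dotProduct] using congrFun hx i
    exact absurd hxi (ne_of_lt (hxi' ▸ hlt.trans_le hsum.le))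
  rw [hall i0, hall j0]

/-- **Derivative of the invariant vector of a stochastic matrix (Golub–Meyer identity):**
for an irreducible row-stochastic F with probability left invariant vector map zfun,
I − F has a group inverse G = (I−F)^#, and for every E with zero row sums such that
F + εE is row-stochastic for all sufficiently small ε > 0, the map ε ↦ z(F + εE) is
(one-sidedly) differentiable at ε = 0 with derivative
(d/dε)|₀ z k (F + εE) = ∑ i j, z i(F) E i j G j k. -/
theorem golub_meyer_derivative_of_invariant_vector
    {L : ℕ}
    (F : Matrix (Fin L) (Fin L) ℝ)
    (hFirr : MatIrreducible F) (hFstoch : RowStochastic F)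
    (zfun : Matrix (Fin L) (Fin L) ℝ → Fin L → ℝ)
    (hzfun : ∀ J, MatIrreducible J → RowStochastic J →
      Matrix.vecMul (zfun J) J = zfun J ∧ ∑ i, zfun J i = 1) :
    ∃ G : Matrix (Fin L) (Fin L) ℝ, IsGroupInverse (1 - F) G ∧
      ∀ E : Matrix (Fin L) (Fin L) ℝ, (∀ i, ∑ j, E i j = 0) →
        (∀ᶠ ε in nhdsWithin (0 : ℝ) (Set.Ioi 0), RowStochastic (F + ε • E)) →
        ∀ k, HasDerivWithinAt (fun ε : ℝ => zfun (F + ε • E) k)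
          (∑ i, ∑ j, zfun F i * E i j * G j k) (Set.Ici 0) 0 := by
  classical
  open Matrix in
  set z : Fin L → ℝ := zfun F with hzdef
  obtain ⟨hzF, hzsum⟩ := hzfun F hFirr hFstoch
  set W : Matrix (Fin L) (Fin L) ℝ := Matrix.of (fun _ j => z j) with hWdef
  set A : Matrix (Fin L) (Fin L) ℝ := 1 - F + W with hAdef
  -- vecMul facts
  have hvW : ∀ v : Fin L → ℝ, (∑ i, v i) = 1 → vecMul v W = z := by
    intro v hv
    funext j
    simp only [vecMul, dotProduct, hWdef, Matrix.of_apply]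
    rw [← Finset.sum_mul, hv, one_mul]
  have hzA : vecMul z A = z := by
    rw [hAdef, vecMul_add, vecMul_sub, vecMul_one, hzF, sub_self, zero_add, hvW z hzsum]
  -- A is invertible
  have hdet : IsUnit A.det := by
    rw [isUnit_iff_ne_zero]
    intro h0
    obtain ⟨v, hv0, hAv⟩ := (Matrix.exists_mulVec_eq_zero_iff).2 h0
    have hzv : z ⬝ᵥ v = 0 := by
      have := congrArg (fun w => z ⬝ᵥ w) hAv
      simpa [Matrix.dotProduct_mulVec, hzA] using this
    have hWv : W.mulVec v = 0 := by
      funext i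
      simpa [Matrix.mulVec, dotProduct, hWdef] using hzv
    have hMv : (1 - F).mulVec v = 0 := by
      have : A.mulVec v = (1 - F).mulVec v + W.mulVec v := by
        rw [hAdef, Matrix.add_mulVec]
      rw [hAv, hWv, add_zero] at this
      exact this.symm
    have hFv : F.mulVec v = v := by
      have := congrFun hMv
      funext i
      have h := this i
      simp [Matrix.sub_mulVec, Matrix.one_mulVec, sub_eq_zero] at h
      exact h.symm
    have hconst := gm_const_of_fixed hFirr hFstoch hFv
    apply hv0
    funext i
    have : z ⬝ᵥ v = v i := by
      simp only [dotProduct]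
      calc ∑ j, z j * v j = ∑ j, z j * v i := by
            exact Finset.sum_congr rfl (fun j _ => by rw [hconst j i])
        _ = v i := by rw [← Finset.sum_mul, hzsum, one_mul]
    rw [Pi.zero_apply, ← this, hzv]
  have hdetne : A.det ≠ 0 := hdet.ne_zero
  have hAB : A * A⁻¹ = 1 := Matrix.mul_nonsing_inv A hdet
  have hBA : A⁻¹ * A = 1 := Matrix.nonsing_inv_mul A hdet
  -- matrix identities
  have hFW : F * W = W := by
    funext i j
    simp only [Matrix.mul_apply, hWdef, Matrix.of_apply]
    rw [← Finset.sum_mul, hFstoch.2 i, one_mul]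
  have hWF : W * F = W := by
    funext i j
    simp only [Matrix.mul_apply, hWdef, Matrix.of_apply]
    exact congrFun hzF j
  have hWW : W * W = W := by
    funext i j
    simp only [Matrix.mul_apply, hWdef, Matrix.of_apply]
    rw [← Finset.sum_mul, hzsum, one_mul]
  have hAW : A * W = W := by
    rw [hAdef, add_mul, sub_mul, one_mul, hFW, sub_self, zero_add, hWW]
  have hWA : W * A = W := by
    rw [hAdef, mul_add, mul_sub, mul_one, hWF, sub_self, zero_add, hWW]
  have hBW : A⁻¹ * W = W := by
    calc A⁻¹ * W = A⁻¹ * (A * W) := by rw [hAW]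
      _ = (A⁻¹ * A) * W := by rw [mul_assoc]
      _ = W := by rw [hBA, one_mul]
  have hWB : W * A⁻¹ = W := by
    calc W * A⁻¹ = (W * A) * A⁻¹ := by rw [hWA]
      _ = W * (A * A⁻¹) := by rw [mul_assoc]
      _ = W := by rw [hAB, mul_one]
  have hMW : (1 - F) * W = 0 := by rw [sub_mul, one_mul, hFW, sub_self]
  have hWM : W * (1 - F) = 0 := by rw [mul_sub, mul_one, hWF, sub_self]
  have hMA : (1 - F) = A - W := by rw [hAdef]; abel
  have hMB : (1 - F) * A⁻¹ = 1 - W := by rw [hMA, sub_mul, hAB, hWB]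
  have hBM : A⁻¹ * (1 - F) = 1 - W := by rw [hMA, mul_sub, hBA, hBW]
  have hMG : (1 - F) * (A⁻¹ - W) = 1 - W := by
    rw [mul_sub, hMB, hMW, sub_zero]
  have hGM : (A⁻¹ - W) * (1 - F) = 1 - W := by
    rw [sub_mul, hBM, hWM, sub_zero]
  have hWG : W * (A⁻¹ - W) = 0 := by
    rw [mul_sub, hWB, hWW, sub_self]
  refine ⟨A⁻¹ - W, ⟨?_, ?_, ?_⟩, ?_⟩
  · -- M G M = M
    rw [hMG, sub_mul, one_mul, hWM, sub_zero]
  · -- G M G = G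
    rw [hGM, sub_mul, one_mul, hWG, sub_zero]
  · -- M G = G M
    rw [hMG, hGM]
  -- the derivative statement
  intro E hE hev k
  set G : Matrix (Fin L) (Fin L) ℝ := A⁻¹ - W with hGdef
  have hzAinv : vecMul z A⁻¹ = z := by
    conv_lhs => rw [← hzA]
    rw [vecMul_vecMul, hAB, vecMul_one]
  -- the matrix A(ε) and its basic properties
  have haeq : ∀ ε : ℝ, A - ε • E = 1 - (F + ε • E) + W := by
    intro ε; rw [hAdef]; abel
  have hA0 : A - (0:ℝ) • E = A := by simp
  have hAc : Continuous (fun ε : ℝ => A - ε • E) := by fun_prop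
  -- continuity of the candidate slope function g
  set g : ℝ → ℝ := fun ε => vecMul z ((A - ε • E)⁻¹ * (E * A⁻¹)) k with hgdef
  have hRinv : ContinuousAt (Ring.inverse : ℝ → ℝ) (A.det) := by
    rw [Ring.inverse_eq_inv']; exact continuousAt_inv₀ hdetne
  have hinv : ContinuousAt (fun ε : ℝ => (A - ε • E)⁻¹) 0 := by
    refine ContinuousAt.comp ?_ hAc.continuousAt
    show ContinuousAt Inv.inv (A - (0:ℝ) • E)
    rw [hA0]
    exact continuousAt_matrix_inv A hRinv
  have hentry : ∀ i j, ContinuousAt (fun ε : ℝ => (A - ε • E)⁻¹ i j) 0 := by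
    intro i j
    exact ((continuous_apply j).continuousAt).comp (((continuous_apply i).continuousAt).comp hinv)
  have hgc : ContinuousAt g 0 := by
    simp only [hgdef, vecMul, dotProduct, Matrix.mul_apply]
    refine tendsto_finset_sum _ (fun i _ => ?_)
    refine Tendsto.mul tendsto_const_nhds ?_
    refine tendsto_finset_sum _ (fun j _ => ?_)
    exact Tendsto.mul (hentry i j) tendsto_const_nhds
  -- eventually (for small ε > 0) things are nice
  have hirr' : ∀ᶠ ε in nhdsWithin (0:ℝ) (Set.Ioi 0), MatIrreducible (F + ε • E) := by
    have key : ∀ᶠ ε in nhds (0:ℝ), ∀ p : Fin L × Fin L,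
        F p.1 p.2 ≠ 0 → F p.1 p.2 + ε * E p.1 p.2 ≠ 0 := by
      rw [eventually_all]
      intro p
      by_cases hp : F p.1 p.2 = 0
      · filter_upwards with ε h; exact absurd hp h
      · have hc : ContinuousAt (fun ε : ℝ => F p.1 p.2 + ε * E p.1 p.2) 0 := by fun_prop
        have h0 : (fun ε : ℝ => F p.1 p.2 + ε * E p.1 p.2) 0 ≠ 0 := by simpa using hp
        filter_upwards [hc.eventually_ne h0] with ε h _
        exact h
    refine (key.filter_mono nhdsWithin_le_nhds).mono (fun ε h => ?_)
    intro B hB hBc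
    obtain ⟨i, hi, j, hj, hij⟩ := hFirr B hB hBc
    refine ⟨i, hi, j, hj, ?_⟩
    have := h (i, j) hij
    simpa [Matrix.add_apply, Matrix.smul_apply, smul_eq_mul] using this
  have hunit : ∀ᶠ ε in nhdsWithin (0:ℝ) (Set.Ioi 0), IsUnit (A - ε • E).det := by
    have hcd : ContinuousAt (fun ε : ℝ => (A - ε • E).det) 0 := hAc.matrix_det.continuousAt
    have h0 : (fun ε : ℝ => (A - ε • E).det) 0 ≠ 0 := by simpa [hA0] using hdetne
    exact ((hcd.eventually_ne h0).filter_mono nhdsWithin_le_nhds).mono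
      (fun ε h => isUnit_iff_ne_zero.2 h)
  have hpos : ∀ᶠ ε in nhdsWithin (0:ℝ) (Set.Ioi 0), (0:ℝ) < ε := by
    exact eventually_mem_nhdsWithin
  -- eventual formula for zfun
  have hform : ∀ᶠ ε in nhdsWithin (0:ℝ) (Set.Ioi 0),
      zfun (F + ε • E) = vecMul z (A - ε • E)⁻¹ := by
    filter_upwards [hev, hirr', hunit] with ε hst hir hu
    obtain ⟨hv1, hv2⟩ := hzfun (F + ε • E) hir hst
    have hvA : vecMul (zfun (F + ε • E)) (A - ε • E) = z := by
      rw [haeq ε, vecMul_add, vecMul_sub, vecMul_one, hv1, sub_self, zero_add,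
        hvW _ hv2]
    calc zfun (F + ε • E)
        = vecMul (zfun (F + ε • E)) ((A - ε • E) * (A - ε • E)⁻¹) := by
          rw [Matrix.mul_nonsing_inv _ hu, vecMul_one]
      _ = vecMul (vecMul (zfun (F + ε • E)) (A - ε • E)) (A - ε • E)⁻¹ := by
          rw [vecMul_vecMul]
      _ = vecMul z (A - ε • E)⁻¹ := by rw [hvA]
  -- the slope eventually equals g
  have hslope : slope (fun ε : ℝ => zfun (F + ε • E) k) 0 =ᶠ[nhdsWithin (0:ℝ) (Set.Ioi 0)] g := by
    filter_upwards [hform, hunit, hpos] with ε hf hu hp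
    have hεne : ε ≠ 0 := ne_of_gt hp
    have hf0 : zfun (F + (0:ℝ) • E) = z := by
      rw [hzdef]; simp
    have hinvdiff : (A - ε • E)⁻¹ - A⁻¹ = ε • ((A - ε • E)⁻¹ * (E * A⁻¹)) := by
      have h1 : (A - ε • E)⁻¹ - A⁻¹
          = (A - ε • E)⁻¹ * (A - (A - ε • E)) * A⁻¹ := by
        rw [mul_sub, sub_mul, Matrix.nonsing_inv_mul _ hu, one_mul, mul_assoc, hAB, mul_one]
      have h2 : A - (A - ε • E) = ε • E := by abel
      rw [h1, h2, mul_assoc, Matrix.smul_mul, Matrix.mul_smul]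
    have hnum : zfun (F + ε • E) k - zfun (F + (0:ℝ) • E) k
        = ε * g ε := by
      rw [hf, hf0]
      have : vecMul z (A - ε • E)⁻¹ k - z k
          = vecMul z ((A - ε • E)⁻¹ - A⁻¹) k := by
        rw [vecMul_sub, hzAinv, Pi.sub_apply]
      rw [this, hinvdiff, hgdef]
      simp only [vecMul, dotProduct, Matrix.smul_apply, smul_eq_mul, Finset.mul_sum]
      exact Finset.sum_congr rfl (fun i _ => by ring)
    rw [slope_def_field, sub_zero, div_eq_iff hεne, hnum, mul_comm]
  -- limit of g
  have hg0 : g 0 = ∑ i, ∑ j, zfun F i * E i j * (A⁻¹ - W) j k := by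
    have hzEW : vecMul (vecMul z E) W k = 0 := by
      have hsumw : ∑ j, vecMul z E j = 0 := by
        simp only [vecMul, dotProduct]
        rw [Finset.sum_comm]
        simp only [← Finset.mul_sum]
        simp [hE]
      simp only [vecMul, dotProduct, hWdef, Matrix.of_apply]
      rw [← Finset.sum_mul]
      simp only [vecMul, dotProduct] at hsumw
      rw [hsumw, zero_mul]
    have h1 : g 0 = vecMul (vecMul z E) A⁻¹ k := by
      rw [hgdef]
      simp only [hA0]
      rw [← vecMul_vecMul, hzAinv, ← vecMul_vecMul]
    have h2 : vecMul (vecMul z E) (A⁻¹ - W) k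
        = ∑ i, ∑ j, zfun F i * E i j * (A⁻¹ - W) j k := by
      simp only [vecMul, dotProduct, ← hzdef]
      rw [Finset.sum_comm]
      refine Finset.sum_congr rfl (fun i _ => ?_)
      rw [Finset.sum_mul]
    rw [h1, ← h2, vecMul_sub, Pi.sub_apply, hzEW, sub_zero]
  -- conclude
  rw [hasDerivWithinAt_iff_tendsto_slope]
  have hset : (Set.Ici (0:ℝ)) \ {0} = Set.Ioi 0 := by
    ext x
    simp only [Set.mem_diff, Set.mem_Ici, Set.mem_singleton_iff, Set.mem_Ioi]
    constructor
    · rintro ⟨h1, h2⟩; exact lt_of_le_of_ne h1 (Ne.symm h2)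
    · intro h; exact ⟨le_of_lt h, ne_of_gt h⟩
  rw [hset]
  refine Tendsto.congr' hslope.symm ?_
  rw [← hg0]
  exact hgc.tendsto.mono_left nhdsWithin_le_nhds
end

section
/- Uniform modulus of continuity for the reweighting kernel: There exists a continuous function γ : (0,∞)^L × (0,∞)^L → [0,∞) with γ(u, u) = 0 for all u ∈ (0,∞)^L, such that for every set X, every family ψ_1,…,ψ_L : X → [0,∞) with Σ_{k=1}^L ψ_k(x) > 0 for all x ∈ X, every x ∈ X, every i, j ∈ {1,…,L}, and every pair u, ũ ∈ (0,∞)^L, the kernel h_ij(u, x) = u_i ψ_j(x) / ( Σ_{k=1}^L u_k ψ_k(x) ) satisfies |h_ij(ũ, x) − h_ij(u, x)| ≤ γ(u, ũ). -/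
/-- **Uniform modulus of continuity for the reweighting kernel:** there is a
continuous γ : (0,∞)^L × (0,∞)^L → [0,∞) with γ(u,u) = 0 such that for every set X,
every family of nonnegative functions ψ with ∑ k ψ k > 0 pointwise, every x, i, j and
all positive u, ũ, the kernel h i j u x = u i ψ j x/∑ k u k ψ k x satisfies
|h i j ũ x − h i j u x| ≤ γ(u, ũ). -/
theorem reweighting_kernel_uniform_modulus {L : ℕ} :
    ∃ γ : (Fin L → ℝ) → (Fin L → ℝ) → ℝ,
      ContinuousOn (fun p : (Fin L → ℝ) × (Fin L → ℝ) => γ p.1 p.2)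
        {p | (∀ k, 0 < p.1 k) ∧ (∀ k, 0 < p.2 k)} ∧
      (∀ u : Fin L → ℝ, (∀ k, 0 < u k) → γ u u = 0) ∧
      (∀ u v : Fin L → ℝ, (∀ k, 0 < u k) → (∀ k, 0 < v k) → 0 ≤ γ u v) ∧
      ∀ (X : Type*) (ψ : Fin L → X → ℝ),
        (∀ i x, 0 ≤ ψ i x) → (∀ x, 0 < ∑ k, ψ k x) →
        ∀ (x : X) (i j : Fin L) (u v : Fin L → ℝ), (∀ k, 0 < u k) → (∀ k, 0 < v k) →
          |v i * ψ j x / (∑ k, v k * ψ k x) - u i * ψ j x / (∑ k, u k * ψ k x)| ≤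
            γ u v := by
  refine ⟨fun u v => ∑ i, ∑ j, ∑ k, |v i * u k - u i * v k| / (u j * v k), ?_, ?_, ?_, ?_⟩
  · apply continuousOn_finset_sum; intro i _
    apply continuousOn_finset_sum; intro j _
    apply continuousOn_finset_sum; intro k _
    apply ContinuousOn.div
    · fun_prop
    · fun_prop
    · rintro ⟨u, v⟩ ⟨hu, hv⟩
      exact (mul_pos (hu j) (hv k)).ne'
  · intro u hu; simp
  · intro u v hu hv
    apply Finset.sum_nonneg; intro i _
    apply Finset.sum_nonneg; intro j _
    apply Finset.sum_nonneg; intro k _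
    exact div_nonneg (abs_nonneg _) (mul_nonneg (hu j).le (hv k).le)
  · intro X ψ hψ hsum x i j u v hu hv
    set Su := ∑ k, u k * ψ k x with hSu_def
    set Sv := ∑ k, v k * ψ k x with hSv_def
    have hpos : ∃ k, 0 < ψ k x := by
      by_contra h; push_neg at h
      have h1 : ∑ k, ψ k x ≤ 0 := Finset.sum_nonpos (fun k _ => h k)
      linarith [hsum x]
    obtain ⟨k₀, hk₀⟩ := hpos
    have hSu : 0 < Su :=
      Finset.sum_pos' (fun k _ => mul_nonneg (hu k).le (hψ k x))
        ⟨k₀, Finset.mem_univ _, mul_pos (hu k₀) hk₀⟩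
    have hSv : 0 < Sv :=
      Finset.sum_pos' (fun k _ => mul_nonneg (hv k).le (hψ k x))
        ⟨k₀, Finset.mem_univ _, mul_pos (hv k₀) hk₀⟩
    have key : v i * ψ j x / Sv - u i * ψ j x / Su
        = (∑ k, (v i * u k - u i * v k) * ψ k x) * ψ j x / (Su * Sv) := by
      have hnum : ∑ k, (v i * u k - u i * v k) * ψ k x = v i * Su - u i * Sv := by
        rw [hSu_def, hSv_def, Finset.mul_sum, Finset.mul_sum, ← Finset.sum_sub_distrib]
        apply Finset.sum_congr rfl; intro k _; ring
      rw [hnum]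
      field_simp
    rw [key]
    have step1 : |(∑ k, (v i * u k - u i * v k) * ψ k x) * ψ j x / (Su * Sv)|
        ≤ ∑ k, |v i * u k - u i * v k| * (ψ k x * ψ j x / (Su * Sv)) := by
      rw [abs_div, abs_of_pos (mul_pos hSu hSv), abs_mul, abs_of_nonneg (hψ j x)]
      rw [div_le_iff₀ (mul_pos hSu hSv)]
      calc |∑ k, (v i * u k - u i * v k) * ψ k x| * ψ j x
          ≤ (∑ k, |v i * u k - u i * v k| * ψ k x) * ψ j x := by
            apply mul_le_mul_of_nonneg_right _ (hψ j x)
            refine (Finset.abs_sum_le_sum_abs _ _).trans ?_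
            apply Finset.sum_le_sum; intro k _
            rw [abs_mul, abs_of_nonneg (hψ k x)]
        _ = (∑ k, |v i * u k - u i * v k| * (ψ k x * ψ j x / (Su * Sv))) * (Su * Sv) := by
            rw [Finset.sum_mul, Finset.sum_mul]
            apply Finset.sum_congr rfl; intro k _
            field_simp
        _ ≤ _ := le_refl _
    have step2 : ∑ k, |v i * u k - u i * v k| * (ψ k x * ψ j x / (Su * Sv))
        ≤ ∑ k, |v i * u k - u i * v k| / (u j * v k) := by
      apply Finset.sum_le_sum; intro k _
      have h1 : u j * ψ j x ≤ Su :=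
        Finset.single_le_sum (fun k _ => mul_nonneg (hu k).le (hψ k x)) (Finset.mem_univ j)
      have h2 : v k * ψ k x ≤ Sv :=
        Finset.single_le_sum (fun m _ => mul_nonneg (hv m).le (hψ m x)) (Finset.mem_univ k)
      have h3 : (u j * ψ j x) * (v k * ψ k x) ≤ Su * Sv :=
        mul_le_mul h1 h2 (mul_nonneg (hv k).le (hψ k x)) hSu.le
      have hd : ψ k x * ψ j x / (Su * Sv) ≤ 1 / (u j * v k) := by
        rw [div_le_div_iff₀ (mul_pos hSu hSv) (mul_pos (hu j) (hv k))]
        nlinarith [h3]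
      calc |v i * u k - u i * v k| * (ψ k x * ψ j x / (Su * Sv))
          ≤ |v i * u k - u i * v k| * (1 / (u j * v k)) :=
            mul_le_mul_of_nonneg_left hd (abs_nonneg _)
        _ = |v i * u k - u i * v k| / (u j * v k) := by rw [mul_one_div]
    have step3 : ∑ k, |v i * u k - u i * v k| / (u j * v k)
        ≤ ∑ i', ∑ j', ∑ k, |v i' * u k - u i' * v k| / (u j' * v k) := by
      have hinner : ∀ i', (fun i' => ∑ j', ∑ k, |v i' * u k - u i' * v k| / (u j' * v k)) i' ≥ 0 := by
        intro i'
        apply Finset.sum_nonneg; intro j' _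
        apply Finset.sum_nonneg; intro k _
        exact div_nonneg (abs_nonneg _) (mul_nonneg (hu j').le (hv k).le)
      calc ∑ k, |v i * u k - u i * v k| / (u j * v k)
          ≤ ∑ j', ∑ k, |v i * u k - u i * v k| / (u j' * v k) := by
            apply Finset.single_le_sum (f := fun j' => ∑ k, |v i * u k - u i * v k| / (u j' * v k))
              (fun j' _ => Finset.sum_nonneg fun k _ =>
                div_nonneg (abs_nonneg _) (mul_nonneg (hu j').le (hv k).le)) (Finset.mem_univ j)
        _ ≤ _ := Finset.single_le_sum (f := fun i' => ∑ j', ∑ k, |v i' * u k - u i' * v k| / (u j' * v k))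
              (fun i' _ => hinner i') (Finset.mem_univ i)
    linarith [step1, step2, step3]
end

section
/- Consistency of iterative EMUS: Let ψ_1,…,ψ_L : X → [0,∞) satisfy Σ_{k=1}^L ψ_k(x) > 0 for all x ∈ X, and for u ∈ (0,∞)^L, x ∈ X define h_ij(u, x) = u_i ψ_j(x)/(Σ_{k=1}^L u_k ψ_k(x)). For each i let (x_t^i)_{t≥0} be a sequence in X, and for w ∈ (0,∞)^L and positive weights n^N = (n_1^N, …, n_L^N) set u^N_k(w) = n_k^N/w_k, F̄^N_ij(w) = (1/N) Σ_{t=0}^{N−1} h_ij(u^N(w), x_t^i), and F_ij(w) = ⟨ h_ij(u(w), ·) ⟩_i with u_k(w) = n_k/w_k. Assume: (i) n_i^N → n_i > 0 as N → ∞; (ii) for every w ∈ (0,∞)^L, F̄^N(w) → F(w) entrywise as N → ∞; (iii) F(n) and every F̄^N(w) (w positive) are irreducible, and z, the true vector of normalization constants, is the unique probability left 1-eigenvector of F(n) and has positive entries. Define the iterates z^{0,N} = n^N and, for m ≥ 0, let z^{m+1,N} be the unique vector satisfying (z^{m+1,N})ᵀ F̄^N(z^{m,N}) = (z^{m+1,N})ᵀ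 with Σ_i z_i^{m+1,N} = 1. Then for every fixed m ≥ 1, z^{m,N} → z as N → ∞. -/
open MeasureTheory Filter

open scoped ENNReal NNReal

set_option maxHeartbeats 1000000

namespace EmusAux

variable {L : ℕ}

lemma vecMul_apply (v : Fin L → ℝ) (M : Matrix (Fin L) (Fin L) ℝ) (j : Fin L) :
    Matrix.vecMul v M j = ∑ i, v i * M i j := by
  simp [Matrix.vecMul, dotProduct]

lemma fixed_nonneg_pos (M : Matrix (Fin L) (Fin L) ℝ) (hM : ∀ i j, 0 ≤ M i j)
    (hirr : MatIrreducible M) (p : Fin L → ℝ) (hp : ∀ i, 0 ≤ p i)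
    (hfix : Matrix.vecMul p M = p) (hne : p ≠ 0) : ∀ j, 0 < p j := by
  by_contra hcon
  push_neg at hcon
  obtain ⟨j0, hj0⟩ := hcon
  have hj0' : p j0 = 0 := le_antisymm hj0 (hp j0)
  set A : Finset (Fin L) := Finset.univ.filter (fun i => p i ≠ 0) with hA
  have hAne : A.Nonempty := by
    rcases Function.ne_iff.1 hne with ⟨i, hi⟩
    exact ⟨i, by simp only [hA, Finset.mem_filter, Finset.mem_univ, true_and]; simpa using hi⟩
  have hAcne : Aᶜ.Nonempty := ⟨j0, by simp [hA, hj0']⟩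
  obtain ⟨i, hiA, j, hjA, hMij⟩ := hirr A hAne hAcne
  have hpj : p j = 0 := by
    simpa [hA] using (Finset.mem_compl.1 hjA)
  have hpi : 0 < p i := lt_of_le_of_ne (hp i) (Ne.symm (by simpa [hA] using hiA))
  have hMpos : 0 < M i j := lt_of_le_of_ne (hM i j) (Ne.symm hMij)
  have hle : p i * M i j ≤ Matrix.vecMul p M j := by
    rw [vecMul_apply]
    exact Finset.single_le_sum (f := fun i' => p i' * M i' j)
      (fun i' _ => mul_nonneg (hp i') (hM i' j)) (Finset.mem_univ i)
  rw [hfix] at hle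
  nlinarith [hle]

lemma posPart_fixed (M : Matrix (Fin L) (Fin L) ℝ) (hM : ∀ i j, 0 ≤ M i j)
    (u : Fin L → ℝ) (hu : ∀ i, 0 < u i) (huM : M.mulVec u = u)
    (v : Fin L → ℝ) (hv : Matrix.vecMul v M = v) :
    Matrix.vecMul (fun i => max (v i) 0) M = (fun i => max (v i) 0) := by
  set p : Fin L → ℝ := fun i => max (v i) 0 with hp
  have hge : ∀ j, p j ≤ Matrix.vecMul p M j := by
    intro j
    rw [vecMul_apply]
    rcases le_or_gt (v j) 0 with hvj | hvj
    · have : p j = 0 := max_eq_right hvj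
      rw [this]
      exact Finset.sum_nonneg fun i _ => mul_nonneg (le_max_right _ _) (hM i j)
    · have : p j = v j := max_eq_left hvj.le
      rw [this, ← hv, vecMul_apply]
      exact Finset.sum_le_sum fun i _ => mul_le_mul_of_nonneg_right (le_max_left _ _) (hM i j)
  have hsum : ∑ j, (Matrix.vecMul p M j - p j) * u j = 0 := by
    have h1 : ∑ j, Matrix.vecMul p M j * u j = ∑ i, p i * u i := by
      simp only [vecMul_apply, Finset.sum_mul]
      rw [Finset.sum_comm]
      refine Finset.sum_congr rfl fun i _ => ?_
      have : ∑ j, M i j * u j = u i := by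
        have := congrFun huM i
        simpa [Matrix.mulVec, dotProduct] using this
      calc ∑ j, p i * M i j * u j = p i * ∑ j, M i j * u j := by
            rw [Finset.mul_sum]; exact Finset.sum_congr rfl fun j _ => by ring
        _ = p i * u i := by rw [this]
    simp only [sub_mul, Finset.sum_sub_distrib, h1, sub_self]
  have heach : ∀ j ∈ Finset.univ, (Matrix.vecMul p M j - p j) * u j = 0 := by
    rw [← Finset.sum_eq_zero_iff_of_nonneg]
    · exact hsum
    · exact fun j _ => mul_nonneg (sub_nonneg.2 (hge j)) (hu j).le
  funext j
  have := heach j (Finset.mem_univ j)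
  have huj := (hu j).ne'
  have : Matrix.vecMul p M j - p j = 0 := by
    rcases mul_eq_zero.1 this with h | h
    · exact h
    · exact absurd h huj
  linarith


lemma fixed_sign (M : Matrix (Fin L) (Fin L) ℝ) (hM : ∀ i j, 0 ≤ M i j)
    (hirr : MatIrreducible M)
    (u : Fin L → ℝ) (hu : ∀ i, 0 < u i) (huM : M.mulVec u = u)
    (v : Fin L → ℝ) (hv : Matrix.vecMul v M = v) :
    (∀ i, 0 ≤ v i) ∨ (∀ i, v i ≤ 0) := by
  set p : Fin L → ℝ := fun i => max (v i) 0 with hpdef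
  set q : Fin L → ℝ := fun i => max (-v i) 0 with hqdef
  have hpfix : Matrix.vecMul p M = p := posPart_fixed M hM u hu huM v hv
  have hvneg : Matrix.vecMul (fun i => -v i) M = fun i => -v i := by
    funext j
    have hj := congrFun hv j
    rw [vecMul_apply] at hj
    rw [vecMul_apply]
    simp only [neg_mul]
    rw [Finset.sum_neg_distrib, hj]
  have hqfix : Matrix.vecMul q M = q := posPart_fixed M hM u hu huM _ hvneg
  by_cases hp0 : p = 0
  · right; intro i
    have h0 : max (v i) 0 = 0 := congrFun hp0 i
    have h1 := le_max_left (v i) (0:ℝ)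
    linarith
  · by_cases hq0 : q = 0
    · left; intro i
      have h0 : max (-v i) 0 = 0 := congrFun hq0 i
      have h1 := le_max_left (-v i) (0:ℝ)
      linarith
    · exfalso
      have hppos := fixed_nonneg_pos M hM hirr p (fun i => le_max_right _ _) hpfix hp0
      have hqpos := fixed_nonneg_pos M hM hirr q (fun i => le_max_right _ _) hqfix hq0
      obtain ⟨i⟩ : Nonempty (Fin L) := by
        rcases Function.ne_iff.1 hp0 with ⟨i, _⟩; exact ⟨i⟩
      have h1 := hppos i
      have h2 := hqpos i
      simp only [hpdef, hqdef, lt_max_iff] at h1 h2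
      rcases h1 with h1 | h1
      · rcases h2 with h2 | h2 <;> linarith
      · linarith
    
lemma fixed_unique (M : Matrix (Fin L) (Fin L) ℝ) (hM : ∀ i j, 0 ≤ M i j)
    (hirr : MatIrreducible M)
    (u : Fin L → ℝ) (hu : ∀ i, 0 < u i) (huM : M.mulVec u = u)
    (v v' : Fin L → ℝ) (hv : Matrix.vecMul v M = v) (hvs : ∑ i, v i = 1)
    (hv' : Matrix.vecMul v' M = v') (hvs' : ∑ i, v' i = 1) : v = v' := by
  set w : Fin L → ℝ := fun i => v i - v' i with hwdef
  have hwfix : Matrix.vecMul w M = w := by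
    funext j
    simp only [vecMul_apply, hwdef, sub_mul, Finset.sum_sub_distrib]
    rw [← vecMul_apply v M j, ← vecMul_apply v' M j, hv, hv']
  have hwsum : ∑ i, w i = 0 := by
    simp [hwdef, Finset.sum_sub_distrib, hvs, hvs']
  have hsign := fixed_sign M hM hirr u hu huM w hwfix
  have hw0 : ∀ i, w i = 0 := by
    rcases hsign with hs | hs
    · intro i
      have := (Finset.sum_eq_zero_iff_of_nonneg (fun i _ => hs i)).1 hwsum
      exact this i (Finset.mem_univ i)
    · intro i
      have hwsum' : ∑ i, -w i = 0 := by simp [hwsum]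
      have := (Finset.sum_eq_zero_iff_of_nonneg (fun i _ => neg_nonneg.2 (hs i))).1 hwsum'
      have := this i (Finset.mem_univ i)
      linarith
  funext i
  have := hw0 i
  simp only [hwdef] at this
  linarith

lemma fixed_prob_nonneg (M : Matrix (Fin L) (Fin L) ℝ) (hM : ∀ i j, 0 ≤ M i j)
    (hirr : MatIrreducible M)
    (u : Fin L → ℝ) (hu : ∀ i, 0 < u i) (huM : M.mulVec u = u)
    (v : Fin L → ℝ) (hv : Matrix.vecMul v M = v) (hvs : ∑ i, v i = 1) :
    ∀ i, 0 ≤ v i := by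
  rcases fixed_sign M hM hirr u hu huM v hv with hs | hs
  · exact hs
  · exfalso
    have : ∑ i, v i ≤ 0 := Finset.sum_nonpos fun i _ => hs i
    linarith


lemma tendsto_fixed_vectors (M : ℕ → Matrix (Fin L) (Fin L) ℝ)
    (Minf : Matrix (Fin L) (Fin L) ℝ)
    (hMconv : ∀ i j, Tendsto (fun N => M N i j) atTop (nhds (Minf i j)))
    (v : ℕ → Fin L → ℝ)
    (hev : ∀ᶠ N in atTop,
      (∀ i, 0 ≤ v N i) ∧ (∑ i, v N i = 1) ∧ Matrix.vecMul (v N) (M N) = v N)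
    (z : Fin L → ℝ)
    (huniq : ∀ v' : Fin L → ℝ, Matrix.vecMul v' Minf = v' → ∑ i, v' i = 1 → v' = z) :
    Tendsto v atTop (nhds z) := by
  set S : Set (Fin L → ℝ) := {w | (∀ i, 0 ≤ w i) ∧ ∑ i, w i = 1} with hSdef
  have hSclosed : IsClosed S := by
    have h1 : IsClosed {w : Fin L → ℝ | ∀ i, 0 ≤ w i} := by
      rw [Set.setOf_forall]
      exact isClosed_iInter fun i => isClosed_le continuous_const (continuous_apply i)
    have h2 : IsClosed {w : Fin L → ℝ | ∑ i, w i = 1} :=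
      isClosed_eq (continuous_finset_sum _ fun i _ => continuous_apply i) continuous_const
    have : S = {w : Fin L → ℝ | ∀ i, 0 ≤ w i} ∩ {w : Fin L → ℝ | ∑ i, w i = 1} := by
      ext w; simp [hSdef, Set.mem_setOf_eq, Set.mem_inter_iff]
    rw [this]; exact h1.inter h2
  have hSbdd : Bornology.IsBounded S := by
    refine (Metric.isBounded_closedBall (x := (0 : Fin L → ℝ)) (r := 1)).subset ?_
    intro w hw
    rw [Metric.mem_closedBall, dist_zero_right]
    rw [pi_norm_le_iff_of_nonneg zero_le_one]
    intro i
    rw [Real.norm_eq_abs, abs_of_nonneg (hw.1 i)]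
    calc w i ≤ ∑ k, w k := Finset.single_le_sum (fun k _ => hw.1 k) (Finset.mem_univ i)
      _ = 1 := hw.2
  have hScomp : IsCompact S := Metric.isCompact_of_isClosed_isBounded hSclosed hSbdd
  apply tendsto_of_subseq_tendsto
  intro ns hns
  have hev' : ∀ᶠ k in atTop,
      (∀ i, 0 ≤ v (ns k) i) ∧ (∑ i, v (ns k) i = 1) ∧
        Matrix.vecMul (v (ns k)) (M (ns k)) = v (ns k) := hns.eventually hev
  obtain ⟨k0, hk0⟩ := eventually_atTop.1 hev'
  have hmem : ∀ k : ℕ, v (ns (k + k0)) ∈ S := by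
    intro k
    have := hk0 (k + k0) (Nat.le_add_left k0 k)
    exact ⟨this.1, this.2.1⟩
  obtain ⟨x, hxS, φ, hφ, hφconv⟩ := hScomp.tendsto_subseq hmem
  set ms : ℕ → ℕ := fun k => φ k + k0 with hmsdef
  have hconv2 : Tendsto (fun k => v (ns (ms k))) atTop (nhds x) := hφconv
  have hmsat : Tendsto (fun k => ns (ms k)) atTop atTop := by
    apply hns.comp
    exact tendsto_atTop_mono (fun k => Nat.le_add_right (φ k) k0) hφ.tendsto_atTop
  have hcomp : ∀ k, (∀ i, 0 ≤ v (ns (ms k)) i) ∧ (∑ i, v (ns (ms k)) i = 1) ∧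
      Matrix.vecMul (v (ns (ms k))) (M (ns (ms k))) = v (ns (ms k)) := by
    intro k; exact hk0 (ms k) (Nat.le_add_left k0 (φ k))
  have hxcoord : ∀ i, Tendsto (fun k => v (ns (ms k)) i) atTop (nhds (x i)) := by
    intro i
    exact (tendsto_pi_nhds.1 hconv2) i
  have hxsum : ∑ i, x i = 1 := by
    have h1 : Tendsto (fun k => ∑ i, v (ns (ms k)) i) atTop (nhds (∑ i, x i)) :=
      tendsto_finset_sum _ fun i _ => hxcoord i
    have h2 : Tendsto (fun k => ∑ i, v (ns (ms k)) i) atTop (nhds 1) := by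
      have : (fun k => ∑ i, v (ns (ms k)) i) = fun _ => (1:ℝ) := by
        funext k; exact (hcomp k).2.1
      rw [this]; exact tendsto_const_nhds
    exact tendsto_nhds_unique h1 h2
  have hxfix : Matrix.vecMul x Minf = x := by
    funext j
    have h1 : Tendsto (fun k => ∑ i, v (ns (ms k)) i * M (ns (ms k)) i j) atTop
        (nhds (∑ i, x i * Minf i j)) := by
      refine tendsto_finset_sum _ fun i _ => ?_
      exact (hxcoord i).mul ((hMconv i j).comp hmsat)
    have h2 : Tendsto (fun k => ∑ i, v (ns (ms k)) i * M (ns (ms k)) i j) atTop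
        (nhds (x j)) := by
      have heq : (fun k => ∑ i, v (ns (ms k)) i * M (ns (ms k)) i j)
          = fun k => v (ns (ms k)) j := by
        funext k
        rw [← vecMul_apply, (hcomp k).2.2]
      rw [heq]; exact hxcoord j
    rw [vecMul_apply]
    exact tendsto_nhds_unique h1 h2
  have hxz : x = z := huniq x hxfix hxsum
  exact ⟨ms, by rw [← hxz]; exact hconv2⟩


variable {X : Type*}

lemma Dpos (ψ : Fin L → X → ℝ) (hψnonneg : ∀ k x, 0 ≤ ψ k x)
    (hsumpos : ∀ x, 0 < ∑ k, ψ k x) (u : Fin L → ℝ) (hu : ∀ k, 0 < u k) (x : X) :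
    0 < ∑ k, u k * ψ k x := by
  obtain ⟨k0, hk0⟩ : ∃ k0, (0:ℝ) < ψ k0 x := by
    have := hsumpos x
    by_contra hc
    push_neg at hc
    have : ∑ k, ψ k x ≤ 0 := Finset.sum_nonpos fun k _ => hc k
    linarith
  exact Finset.sum_pos' (fun k _ => mul_nonneg (hu k).le (hψnonneg k x))
    ⟨k0, Finset.mem_univ k0, mul_pos (hu k0) hk0⟩

lemma frac_le (ψ : Fin L → X → ℝ) (hψnonneg : ∀ k x, 0 ≤ ψ k x)
    (hsumpos : ∀ x, 0 < ∑ k, ψ k x) (u : Fin L → ℝ) (hu : ∀ k, 0 < u k) (x : X)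
    (l : Fin L) : ψ l x / (∑ k, u k * ψ k x) ≤ 1 / u l := by
  rw [div_le_div_iff₀ (Dpos ψ hψnonneg hsumpos u hu x) (hu l)]
  have h1 : u l * ψ l x ≤ ∑ k, u k * ψ k x :=
    Finset.single_le_sum (f := fun k => u k * ψ k x)
      (fun k _ => mul_nonneg (hu k).le (hψnonneg k x)) (Finset.mem_univ l)
  nlinarith

lemma h_diff_bound (ψ : Fin L → X → ℝ) (hψnonneg : ∀ k x, 0 ≤ ψ k x)
    (hsumpos : ∀ x, 0 < ∑ k, ψ k x) (u v : Fin L → ℝ)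
    (hu : ∀ k, 0 < u k) (hv : ∀ k, 0 < v k) (i j : Fin L) (x : X) :
    |u i * ψ j x / (∑ k, u k * ψ k x) - v i * ψ j x / (∑ k, v k * ψ k x)|
      ≤ |u i - v i| / u j + (v i / u j) * ∑ k, |u k - v k| / v k := by
  set Du := ∑ k, u k * ψ k x with hDu
  set Dv := ∑ k, v k * ψ k x with hDv
  have hDu0 : 0 < Du := Dpos ψ hψnonneg hsumpos u hu x
  have hDv0 : 0 < Dv := Dpos ψ hψnonneg hsumpos v hv x
  have hsplit : u i * ψ j x / Du - v i * ψ j x / Dv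
      = (u i - v i) * (ψ j x / Du) + (v i * (ψ j x / Du)) * ((Dv - Du) / Dv) := by
    field_simp
    ring
  have h1 : |(u i - v i) * (ψ j x / Du)| ≤ |u i - v i| / u j := by
    rw [abs_mul, abs_of_nonneg (div_nonneg (hψnonneg j x) hDu0.le)]
    calc |u i - v i| * (ψ j x / Du) ≤ |u i - v i| * (1 / u j) :=
          mul_le_mul_of_nonneg_left (frac_le ψ hψnonneg hsumpos u hu x j) (abs_nonneg _)
      _ = |u i - v i| / u j := by ring
  have habs : |Dv - Du| / Dv ≤ ∑ k, |u k - v k| / v k := by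
    have h2 : |Dv - Du| ≤ ∑ k, |u k - v k| * ψ k x := by
      have heq : Dv - Du = ∑ k, (v k - u k) * ψ k x := by
        rw [hDu, hDv, ← Finset.sum_sub_distrib]
        exact Finset.sum_congr rfl fun k _ => by ring
      calc |Dv - Du| = |∑ k, (v k - u k) * ψ k x| := by rw [heq]
        _ ≤ ∑ k, |(v k - u k) * ψ k x| := Finset.abs_sum_le_sum_abs _ _
        _ = ∑ k, |u k - v k| * ψ k x := by
            refine Finset.sum_congr rfl fun k _ => ?_
            rw [abs_mul, abs_of_nonneg (hψnonneg k x), abs_sub_comm]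
    calc |Dv - Du| / Dv ≤ (∑ k, |u k - v k| * ψ k x) / Dv := by
          gcongr
      _ = ∑ k, |u k - v k| * (ψ k x / Dv) := by
          rw [Finset.sum_div]
          exact Finset.sum_congr rfl fun k _ => (mul_div_assoc _ _ _)
      _ ≤ ∑ k, |u k - v k| * (1 / v k) := by
          refine Finset.sum_le_sum fun k _ => ?_
          exact mul_le_mul_of_nonneg_left (frac_le ψ hψnonneg hsumpos v hv x k) (abs_nonneg _)
      _ = ∑ k, |u k - v k| / v k := by
          exact Finset.sum_congr rfl fun k _ => by rw [mul_one_div]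
  have h2 : |(v i * (ψ j x / Du)) * ((Dv - Du) / Dv)| ≤ (v i / u j) * ∑ k, |u k - v k| / v k := by
    rw [abs_mul]
    have ha : |v i * (ψ j x / Du)| = v i * (ψ j x / Du) :=
      abs_of_nonneg (mul_nonneg (hv i).le (div_nonneg (hψnonneg j x) hDu0.le))
    have hb : |(Dv - Du) / Dv| = |Dv - Du| / Dv := by
      rw [abs_div, abs_of_pos hDv0]
    rw [ha, hb]
    have hc : v i * (ψ j x / Du) ≤ v i / u j := by
      calc v i * (ψ j x / Du) ≤ v i * (1 / u j) :=
            mul_le_mul_of_nonneg_left (frac_le ψ hψnonneg hsumpos u hu x j) (hv i).le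
        _ = v i / u j := by ring
    refine mul_le_mul hc habs (by positivity) (div_nonneg (hv i).le (hu j).le)
  calc |u i * ψ j x / Du - v i * ψ j x / Dv|
      = |(u i - v i) * (ψ j x / Du) + (v i * (ψ j x / Du)) * ((Dv - Du) / Dv)| := by rw [hsplit]
    _ ≤ |(u i - v i) * (ψ j x / Du)| + |(v i * (ψ j x / Du)) * ((Dv - Du) / Dv)| := abs_add_le _ _
    _ ≤ |u i - v i| / u j + (v i / u j) * ∑ k, |u k - v k| / v k := add_le_add h1 h2

lemma h_le (ψ : Fin L → X → ℝ) (hψnonneg : ∀ k x, 0 ≤ ψ k x)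
    (hsumpos : ∀ x, 0 < ∑ k, ψ k x) (u : Fin L → ℝ) (hu : ∀ k, 0 < u k) (i j : Fin L)
    (x : X) : u i * ψ j x / (∑ k, u k * ψ k x) ≤ u i / u j := by
  have := frac_le ψ hψnonneg hsumpos u hu x j
  calc u i * ψ j x / (∑ k, u k * ψ k x) = u i * (ψ j x / (∑ k, u k * ψ k x)) := by
        rw [mul_div_assoc]
    _ ≤ u i * (1 / u j) := mul_le_mul_of_nonneg_left this (hu i).le
    _ = u i / u j := by ring

lemma h_nonneg (ψ : Fin L → X → ℝ) (hψnonneg : ∀ k x, 0 ≤ ψ k x)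
    (hsumpos : ∀ x, 0 < ∑ k, ψ k x) (u : Fin L → ℝ) (hu : ∀ k, 0 < u k) (i j : Fin L)
    (x : X) : 0 ≤ u i * ψ j x / (∑ k, u k * ψ k x) :=
  div_nonneg (mul_nonneg (hu i).le (hψnonneg j x)) (Dpos ψ hψnonneg hsumpos u hu x).le

lemma row_sum (ψ : Fin L → X → ℝ) (hψnonneg : ∀ k x, 0 ≤ ψ k x)
    (hsumpos : ∀ x, 0 < ∑ k, ψ k x) (u : Fin L → ℝ) (hu : ∀ k, 0 < u k) (i : Fin L)
    (x : X) : ∑ j, (u i * ψ j x / (∑ k, u k * ψ k x)) * u j = u i := by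
  have hD := Dpos ψ hψnonneg hsumpos u hu x
  calc ∑ j, (u i * ψ j x / (∑ k, u k * ψ k x)) * u j
      = (∑ j, u j * ψ j x) * (u i / (∑ k, u k * ψ k x)) := by
        rw [Finset.sum_mul]
        exact Finset.sum_congr rfl fun j _ => by ring
    _ = u i := by
        rw [mul_comm, div_mul_cancel₀]
        exact hD.ne'


lemma integral_pib [MeasurableSpace X] (π : Measure X) (ψi : X → ℝ)
    (hmeas : Measurable ψi) (hnonneg : ∀ x, 0 ≤ ψi x) (g : X → ℝ) :
    ∫ x, g x ∂((ENNReal.ofReal (∫ x, ψi x ∂π))⁻¹ •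
        π.withDensity fun x => ENNReal.ofReal (ψi x))
      = (∫ x, ψi x ∂π)⁻¹ * ∫ x, ψi x * g x ∂π := by
  have hI : 0 ≤ ∫ x, ψi x ∂π := integral_nonneg hnonneg
  rw [integral_smul_measure]
  have hd : (π.withDensity fun x => ENNReal.ofReal (ψi x))
      = π.withDensity fun x => ((ψi x).toNNReal : ℝ≥0∞) := rfl
  rw [hd, integral_withDensity_eq_integral_smul (by measurability : Measurable fun x => (ψi x).toNNReal) g]
  have : ∀ x, (ψi x).toNNReal • g x = ψi x * g x := by
    intro x
    rw [NNReal.smul_def, Real.coe_toNNReal _ (hnonneg x), smul_eq_mul]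
  simp only [this]
  rw [ENNReal.toReal_inv, ENNReal.toReal_ofReal hI, smul_eq_mul]

lemma pib_prob [MeasurableSpace X] (π : Measure X) [IsProbabilityMeasure π] (ψi : X → ℝ)
    (hnonneg : ∀ x, 0 ≤ ψi x) (hint : Integrable ψi π) (hpos : 0 < ∫ x, ψi x ∂π) :
    IsProbabilityMeasure ((ENNReal.ofReal (∫ x, ψi x ∂π))⁻¹ •
        π.withDensity fun x => ENNReal.ofReal (ψi x)) := by
  constructor
  rw [Measure.smul_apply, smul_eq_mul]
  rw [MeasureTheory.withDensity_apply _ MeasurableSet.univ, Measure.restrict_univ]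
  rw [← ofReal_integral_eq_lintegral_ofReal hint (ae_of_all _ hnonneg)]
  exact ENNReal.inv_mul_cancel (by simpa using (ENNReal.ofReal_pos.2 hpos).ne')
    ENNReal.ofReal_ne_top

end EmusAux

/-- **Consistency of iterative EMUS:** with the reweighting kernel
h i j u x = u i ψ j x/∑ k u k ψ k x, sample matrices
F̄^N_ij(w) = (1/N) ∑_{t<N} h i j (n^N/w) (x^i_t) converging entrywise to
F_ij(w) = ⟨h i j (n/w) ·⟩_i for every positive w, weights n^N → n > 0,
irreducibility of F(n) and of every F̄^N(w), and z the unique probability left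
1-eigenvector of F(n), the iterates z^{0,N} = n^N,
(z^{m+1,N})ᵀ F̄^N(z^{m,N}) = (z^{m+1,N})ᵀ, ∑ z^{m+1,N} = 1
satisfy z^{m,N} → z as N → ∞, for every fixed m ≥ 1. -/
theorem iterative_emus_consistency
    {X : Type*} [MeasurableSpace X] (π : Measure X) [IsProbabilityMeasure π]
    {L : ℕ} (hL : 0 < L)
    (ψ : Fin L → X → ℝ) (hψmeas : ∀ i, Measurable (ψ i)) (hψnonneg : ∀ i x, 0 ≤ ψ i x)
    (hψint : ∀ i, Integrable (ψ i) π) (hψpos : ∀ i, 0 < ∫ x, ψ i x ∂π)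
    (hsumpos : ∀ x, 0 < ∑ k, ψ k x)
    (πb : Fin L → Measure X)
    (hπb : ∀ i, πb i = (ENNReal.ofReal (∫ x, ψ i x ∂π))⁻¹ •
      π.withDensity fun x => ENNReal.ofReal (ψ i x))
    (h : Fin L → Fin L → (Fin L → ℝ) → X → ℝ)
    (hh : ∀ i j u x, h i j u x = u i * ψ j x / ∑ k, u k * ψ k x)
    (xs : Fin L → ℕ → X)
    (nN : ℕ → Fin L → ℝ) (hnNpos : ∀ N i, 0 < nN N i)
    (n : Fin L → ℝ) (hnpos : ∀ i, 0 < n i)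
    (hnlim : ∀ i, Tendsto (fun N => nN N i) atTop (nhds (n i)))
    (Fbar : ℕ → (Fin L → ℝ) → Matrix (Fin L) (Fin L) ℝ)
    (hFbar : ∀ N w i j, Fbar N w i j =
      (1 / (N : ℝ)) * ∑ t ∈ Finset.range N, h i j (fun k => nN N k / w k) (xs i t))
    (F : (Fin L → ℝ) → Matrix (Fin L) (Fin L) ℝ)
    (hF : ∀ w i j, F w i j = ∫ x', h i j (fun k => n k / w k) x' ∂(πb i))
    (hconv : ∀ w : Fin L → ℝ, (∀ k, 0 < w k) → ∀ i j,
      Tendsto (fun N => Fbar N w i j) atTop (nhds (F w i j)))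
    (hFirr : MatIrreducible (F n))
    (hFbarirr : ∀ N, 1 ≤ N → ∀ w : Fin L → ℝ, (∀ k, 0 < w k) →
      MatIrreducible (Fbar N w))
    (z : Fin L → ℝ) (hzinv : Matrix.vecMul z (F n) = z) (hzsum : ∑ i, z i = 1)
    (hzpos : ∀ i, 0 < z i)
    (hzuniq : ∀ z' : Fin L → ℝ, Matrix.vecMul z' (F n) = z' → ∑ i, z' i = 1 → z' = z)
    (zit : ℕ → ℕ → Fin L → ℝ)
    (hzit0 : ∀ N, zit 0 N = nN N)
    (hzit : ∀ m N, 1 ≤ N →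
      Matrix.vecMul (zit (m + 1) N) (Fbar N (zit m N)) = zit (m + 1) N ∧
      ∑ i, zit (m + 1) N i = 1) :
    ∀ m, 1 ≤ m → Tendsto (fun N => zit m N) atTop (nhds z) := by
  classical
  -- basic abbreviations
  have hmeas : ∀ i j (u : Fin L → ℝ), Measurable (fun x => h i j u x) := by
    intro i j u
    simp only [hh]
    exact (measurable_const.mul (hψmeas j)).div (by measurability)
  have hprob : ∀ i, IsProbabilityMeasure (πb i) := by
    intro i
    rw [hπb i]
    exact EmusAux.pib_prob π (ψ i) (hψnonneg i) (hψint i) (hψpos i)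
  have hpibint : ∀ i (g : X → ℝ),
      ∫ x, g x ∂(πb i) = (∫ x, ψ i x ∂π)⁻¹ * ∫ x, ψ i x * g x ∂π := by
    intro i g
    rw [hπb i]
    exact EmusAux.integral_pib π (ψ i) (hψmeas i) (hψnonneg i) g
  have hhnn : ∀ (u : Fin L → ℝ), (∀ k, 0 < u k) → ∀ i j x, 0 ≤ h i j u x := by
    intro u hu i j x
    rw [hh]
    exact EmusAux.h_nonneg ψ hψnonneg hsumpos u hu i j x
  have hint : ∀ i j (u : Fin L → ℝ), (∀ k, 0 < u k) →
      Integrable (fun x => h i j u x) (πb i) := by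
    intro i j u hu
    have := hprob i
    refine Integrable.mono' (integrable_const (u i / u j))
      (hmeas i j u).aestronglyMeasurable (ae_of_all _ fun x => ?_)
    rw [Real.norm_eq_abs, abs_of_nonneg (hhnn u hu i j x), hh]
    exact EmusAux.h_le ψ hψnonneg hsumpos u hu i j x
  -- the true normalization constants fix F w for every positive w
  have hZpos : (0:ℝ) < ∑ k, ∫ x, ψ k x ∂π :=
    Finset.sum_pos (fun k _ => hψpos k) ⟨⟨0, hL⟩, Finset.mem_univ _⟩
  have hkey : ∀ w : Fin L → ℝ, (∀ k, 0 < w k) →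
      Matrix.vecMul (fun i => (∫ x, ψ i x ∂π) / ∑ k, ∫ x, ψ k x ∂π) (F w)
        = fun i => (∫ x, ψ i x ∂π) / ∑ k, ∫ x, ψ k x ∂π := by
    intro w hw
    have hupos : ∀ k, 0 < n k / w k := fun k => div_pos (hnpos k) (hw k)
    funext j
    rw [EmusAux.vecMul_apply]
    have hintg : ∀ i, Integrable (fun x => ψ i x * h i j (fun k => n k / w k) x) π := by
      intro i
      refine Integrable.mono' ((hψint i).const_mul ((n i / w i) / (n j / w j)))
        ((hψmeas i).mul (hmeas i j _)).aestronglyMeasurable (ae_of_all _ fun x => ?_)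
      rw [Real.norm_eq_abs,
        abs_of_nonneg (mul_nonneg (hψnonneg i x) (hhnn _ hupos i j x))]
      calc ψ i x * h i j (fun k => n k / w k) x
          ≤ ψ i x * ((n i / w i) / (n j / w j)) := by
            refine mul_le_mul_of_nonneg_left ?_ (hψnonneg i x)
            rw [hh]
            exact EmusAux.h_le ψ hψnonneg hsumpos _ hupos i j x
        _ = (n i / w i) / (n j / w j) * ψ i x := by ring
    have hpt : ∀ x, ∑ i, ψ i x * h i j (fun k => n k / w k) x = ψ j x := by
      intro x
      have hD := EmusAux.Dpos ψ hψnonneg hsumpos _ hupos x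
      simp only [hh]
      calc ∑ i, ψ i x * ((n i / w i) * ψ j x / ∑ k, (n k / w k) * ψ k x)
          = (∑ i, (n i / w i) * ψ i x) * (ψ j x / ∑ k, (n k / w k) * ψ k x) := by
            rw [Finset.sum_mul]
            exact Finset.sum_congr rfl fun i _ => by ring
        _ = ψ j x := by
            rw [mul_comm, div_mul_cancel₀ _ hD.ne']
    calc ∑ i, (∫ x, ψ i x ∂π) / (∑ k, ∫ x, ψ k x ∂π) * F w i j
        = ∑ i, (1 / ∑ k, ∫ x, ψ k x ∂π) * ∫ x, ψ i x * h i j (fun k => n k / w k) x ∂π := by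
          refine Finset.sum_congr rfl fun i _ => ?_
          rw [hF w i j, hpibint i (fun x => h i j (fun k => n k / w k) x)]
          have hci : (∫ x, ψ i x ∂π) ≠ 0 := (hψpos i).ne'
          field_simp
      _ = (1 / ∑ k, ∫ x, ψ k x ∂π) * ∑ i, ∫ x, ψ i x * h i j (fun k => n k / w k) x ∂π := by
          rw [Finset.mul_sum]
      _ = (1 / ∑ k, ∫ x, ψ k x ∂π) * ∫ x, ∑ i, ψ i x * h i j (fun k => n k / w k) x ∂π := by
          rw [integral_finset_sum _ fun i _ => hintg i]
      _ = (1 / ∑ k, ∫ x, ψ k x ∂π) * ∫ x, ψ j x ∂π := by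
          congr 1
          exact integral_congr_ae (ae_of_all _ hpt)
      _ = (∫ x, ψ j x ∂π) / ∑ k, ∫ x, ψ k x ∂π := by ring
  have hztsum : ∑ i, (∫ x, ψ i x ∂π) / (∑ k, ∫ x, ψ k x ∂π) = 1 := by
    rw [← Finset.sum_div]
    exact div_self hZpos.ne'
  have hztz : (fun i => (∫ x, ψ i x ∂π) / ∑ k, ∫ x, ψ k x ∂π) = z :=
    hzuniq _ (hkey n hnpos) hztsum
  have hzFz : Matrix.vecMul z (F z) = z := by
    have := hkey z hzpos
    rwa [hztz] at this
  -- nonnegativity and right eigenvector of F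
  have hFnonneg : ∀ (w : Fin L → ℝ), (∀ k, 0 < w k) → ∀ i j, 0 ≤ F w i j := by
    intro w hw i j
    rw [hF]
    exact integral_nonneg fun x => hhnn _ (fun k => div_pos (hnpos k) (hw k)) i j x
  have hFright : ∀ (w : Fin L → ℝ), (∀ k, 0 < w k) →
      (F w).mulVec (fun k => n k / w k) = fun k => n k / w k := by
    intro w hw
    have hupos : ∀ k, 0 < n k / w k := fun k => div_pos (hnpos k) (hw k)
    have := fun i => hprob i
    funext i
    have hmv : (F w).mulVec (fun k => n k / w k) i = ∑ j, F w i j * (n j / w j) := by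
      simp [Matrix.mulVec, dotProduct]
    rw [hmv]
    calc ∑ j, F w i j * (n j / w j)
        = ∑ j, ∫ x, h i j (fun k => n k / w k) x * (n j / w j) ∂(πb i) := by
          refine Finset.sum_congr rfl fun j _ => ?_
          rw [hF w i j, ← integral_mul_const]
      _ = ∫ x, ∑ j, h i j (fun k => n k / w k) x * (n j / w j) ∂(πb i) := by
          rw [integral_finset_sum _ fun j _ => (hint i j _ hupos).mul_const _]
      _ = ∫ x, (n i / w i) ∂(πb i) := by
          refine integral_congr_ae (ae_of_all _ fun x => ?_)
          simp only [hh]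
          exact EmusAux.row_sum ψ hψnonneg hsumpos _ hupos i x
      _ = n i / w i := by
          have := hprob i
          simp
  -- irreducibility of F z
  have hFcomp : ∀ (w : Fin L → ℝ), (∀ k, 0 < w k) → ∀ i j,
      ((n i / w i) / ∑ k, n k / w k) * F n i j ≤ F w i j := by
    intro w hw i j
    have hupos : ∀ k, 0 < n k / w k := fun k => div_pos (hnpos k) (hw k)
    have hsu : 0 < ∑ k, n k / w k :=
      Finset.sum_pos (fun k _ => hupos k) ⟨⟨0, hL⟩, Finset.mem_univ _⟩
    have := hprob i
    rw [hF w i j, hF n i j, ← integral_const_mul]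
    refine integral_mono ((hint i j _ (fun k => div_pos (hnpos k) (hnpos k))).const_mul _)
      (hint i j _ hupos) fun x => ?_
    simp only [hh]
    have hone : ∀ k, n k / n k = (1:ℝ) := fun k => div_self (hnpos k).ne'
    simp only [hone, one_mul]
    have hDψ := hsumpos x
    have hDu := EmusAux.Dpos ψ hψnonneg hsumpos _ hupos x
    have hle : ∑ k, (n k / w k) * ψ k x ≤ (∑ k, n k / w k) * ∑ k, ψ k x := by
      rw [Finset.sum_mul]
      refine Finset.sum_le_sum fun k _ => ?_
      refine mul_le_mul_of_nonneg_left ?_ (hupos k).le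
      exact Finset.single_le_sum (fun l _ => hψnonneg l x) (Finset.mem_univ k)
    have h2 : (n i / w i) * ψ j x / ((∑ k, n k / w k) * ∑ k, ψ k x)
        ≤ (n i / w i) * ψ j x / ∑ k, (n k / w k) * ψ k x := by
      exact div_le_div_of_nonneg_left (mul_nonneg (hupos i).le (hψnonneg j x)) hDu hle
    calc (n i / w i) / (∑ k, n k / w k) * (ψ j x / ∑ k, ψ k x)
        = (n i / w i) * ψ j x / ((∑ k, n k / w k) * ∑ k, ψ k x) := by ring
      _ ≤ (n i / w i) * ψ j x / ∑ k, (n k / w k) * ψ k x := h2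
  have hFzirr : MatIrreducible (F z) := by
    intro A hA hAc
    obtain ⟨i, hiA, j, hjA, hij⟩ := hFirr A hA hAc
    refine ⟨i, hiA, j, hjA, ?_⟩
    have h1 : 0 < F n i j := lt_of_le_of_ne (hFnonneg n hnpos i j) (Ne.symm hij)
    have h2 := hFcomp z hzpos i j
    have hsu : 0 < ∑ k, n k / z k :=
      Finset.sum_pos (fun k _ => div_pos (hnpos k) (hzpos k)) ⟨⟨0, hL⟩, Finset.mem_univ _⟩
    have h3 : 0 < ((n i / z i) / ∑ k, n k / z k) * F n i j :=
      mul_pos (div_pos (div_pos (hnpos i) (hzpos i)) hsu) h1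
    exact (lt_of_lt_of_le h3 h2).ne'
  have huniqz : ∀ v : Fin L → ℝ, Matrix.vecMul v (F z) = v → ∑ i, v i = 1 → v = z := by
    intro v hv hs
    exact EmusAux.fixed_unique (F z) (hFnonneg z hzpos) hFzirr (fun k => n k / z k)
      (fun k => div_pos (hnpos k) (hzpos k)) (hFright z hzpos) v z hv hs hzFz hzsum
  -- sample matrices: nonnegativity and right eigenvector
  have hFbarnonneg : ∀ N (w : Fin L → ℝ), (∀ k, 0 < w k) → ∀ i j, 0 ≤ Fbar N w i j := by
    intro N w hw i j
    rw [hFbar]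
    refine mul_nonneg (by positivity) (Finset.sum_nonneg fun t _ => ?_)
    exact hhnn _ (fun k => div_pos (hnNpos N k) (hw k)) i j (xs i t)
  have hFbarright : ∀ N, 1 ≤ N → ∀ (w : Fin L → ℝ), (∀ k, 0 < w k) →
      (Fbar N w).mulVec (fun k => nN N k / w k) = fun k => nN N k / w k := by
    intro N hN w hw
    have hupos : ∀ k, 0 < nN N k / w k := fun k => div_pos (hnNpos N k) (hw k)
    have hNne : (N:ℝ) ≠ 0 := by positivity
    funext i
    have hmv : (Fbar N w).mulVec (fun k => nN N k / w k) i
        = ∑ j, Fbar N w i j * (nN N j / w j) := by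
      simp [Matrix.mulVec, dotProduct]
    rw [hmv]
    calc ∑ j, Fbar N w i j * (nN N j / w j)
        = (1 / (N:ℝ)) * ∑ j, ∑ t ∈ Finset.range N,
            h i j (fun k => nN N k / w k) (xs i t) * (nN N j / w j) := by
          rw [Finset.mul_sum]
          refine Finset.sum_congr rfl fun j _ => ?_
          rw [hFbar, mul_assoc, Finset.sum_mul]
      _ = (1 / (N:ℝ)) * ∑ t ∈ Finset.range N, ∑ j,
            h i j (fun k => nN N k / w k) (xs i t) * (nN N j / w j) := by
          rw [Finset.sum_comm]
      _ = (1 / (N:ℝ)) * ∑ t ∈ Finset.range N, (nN N i / w i) := by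
          congr 1
          refine Finset.sum_congr rfl fun t _ => ?_
          simp only [hh]
          exact EmusAux.row_sum ψ hψnonneg hsumpos _ hupos i (xs i t)
      _ = nN N i / w i := by
          rw [Finset.sum_const, Finset.card_range, nsmul_eq_mul]
          field_simp
  -- convergence of sample matrices along converging weight sequences
  have hmatconv : ∀ (wseq : ℕ → Fin L → ℝ) (wstar : Fin L → ℝ), (∀ k, 0 < wstar k) →
      Tendsto wseq atTop (nhds wstar) → ∀ i j,
      Tendsto (fun N => Fbar N (wseq N) i j) atTop (nhds (F wstar i j)) := by
    intro wseq wstar hws hwlim i j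
    have hwco : ∀ k, Tendsto (fun N => wseq N k) atTop (nhds (wstar k)) :=
      fun k => (tendsto_pi_nhds.1 hwlim) k
    have hwev : ∀ᶠ N in atTop, ∀ k, 0 < wseq N k := by
      rw [eventually_all]
      intro k
      exact (hwco k).eventually (eventually_gt_nhds (hws k))
    have huspos : ∀ k, 0 < n k / wstar k := fun k => div_pos (hnpos k) (hws k)
    have huN : ∀ k, Tendsto (fun N => nN N k / wseq N k) atTop (nhds (n k / wstar k)) :=
      fun k => (hnlim k).div (hwco k) (hws k).ne'
    have hvN : ∀ k, Tendsto (fun N => nN N k / wstar k) atTop (nhds (n k / wstar k)) :=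
      fun k => (hnlim k).div_const _
    have hBlim : Tendsto (fun N => |nN N i / wseq N i - nN N i / wstar i| / (nN N j / wseq N j)
        + ((nN N i / wstar i) / (nN N j / wseq N j)) *
          ∑ k, |nN N k / wseq N k - nN N k / wstar k| / (nN N k / wstar k))
        atTop (nhds 0) := by
      have hlim : Tendsto (fun N => |nN N i / wseq N i - nN N i / wstar i| / (nN N j / wseq N j)
          + ((nN N i / wstar i) / (nN N j / wseq N j)) *
            ∑ k, |nN N k / wseq N k - nN N k / wstar k| / (nN N k / wstar k))
          atTop (nhds (|n i / wstar i - n i / wstar i| / (n j / wstar j)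
          + ((n i / wstar i) / (n j / wstar j)) *
            ∑ k, |n k / wstar k - n k / wstar k| / (n k / wstar k))) := by
        refine Tendsto.add ?_ ?_
        · exact (((huN i).sub (hvN i)).abs).div (huN j) (huspos j).ne'
        · exact ((hvN i).div (huN j) (huspos j).ne').mul
            (tendsto_finset_sum _ fun k _ =>
              (((huN k).sub (hvN k)).abs).div (hvN k) (huspos k).ne')
      simpa using hlim
    have hdiff : ∀ᶠ N in atTop,
        ‖Fbar N (wseq N) i j - Fbar N wstar i j‖
          ≤ |nN N i / wseq N i - nN N i / wstar i| / (nN N j / wseq N j)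
        + ((nN N i / wstar i) / (nN N j / wseq N j)) *
          ∑ k, |nN N k / wseq N k - nN N k / wstar k| / (nN N k / wstar k) := by
      filter_upwards [hwev, eventually_ge_atTop 1] with N hwp hN1
      have hNpos : (0:ℝ) < N := by exact_mod_cast hN1
      have hup : ∀ k, 0 < nN N k / wseq N k := fun k => div_pos (hnNpos N k) (hwp k)
      have hvp : ∀ k, 0 < nN N k / wstar k := fun k => div_pos (hnNpos N k) (hws k)
      rw [Real.norm_eq_abs, hFbar, hFbar]
      calc |1 / (N:ℝ) * ∑ t ∈ Finset.range N, h i j (fun k => nN N k / wseq N k) (xs i t)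
            - 1 / (N:ℝ) * ∑ t ∈ Finset.range N, h i j (fun k => nN N k / wstar k) (xs i t)|
          = 1 / (N:ℝ) * |∑ t ∈ Finset.range N,
              (h i j (fun k => nN N k / wseq N k) (xs i t)
                - h i j (fun k => nN N k / wstar k) (xs i t))| := by
            rw [← mul_sub, ← Finset.sum_sub_distrib, abs_mul, abs_of_nonneg (by positivity)]
        _ ≤ 1 / (N:ℝ) * ∑ t ∈ Finset.range N,
              |h i j (fun k => nN N k / wseq N k) (xs i t)
                - h i j (fun k => nN N k / wstar k) (xs i t)| := by
            exact mul_le_mul_of_nonneg_left (Finset.abs_sum_le_sum_abs _ _) (by positivity)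
        _ ≤ 1 / (N:ℝ) * ∑ t ∈ Finset.range N,
              (|nN N i / wseq N i - nN N i / wstar i| / (nN N j / wseq N j)
              + ((nN N i / wstar i) / (nN N j / wseq N j)) *
                ∑ k, |nN N k / wseq N k - nN N k / wstar k| / (nN N k / wstar k)) := by
            refine mul_le_mul_of_nonneg_left (Finset.sum_le_sum fun t _ => ?_) (by positivity)
            simp only [hh]
            exact EmusAux.h_diff_bound ψ hψnonneg hsumpos _ _ hup hvp i j (xs i t)
        _ = |nN N i / wseq N i - nN N i / wstar i| / (nN N j / wseq N j)
              + ((nN N i / wstar i) / (nN N j / wseq N j)) *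
                ∑ k, |nN N k / wseq N k - nN N k / wstar k| / (nN N k / wstar k) := by
            rw [Finset.sum_const, Finset.card_range, nsmul_eq_mul]
            field_simp
    have hzero : Tendsto (fun N => Fbar N (wseq N) i j - Fbar N wstar i j) atTop (nhds 0) :=
      squeeze_zero_norm' hdiff hBlim
    have hsum := (hconv wstar hws i j).add hzero
    simpa using hsum
  -- the induction step
  have hstep : ∀ (m : ℕ) (wstar : Fin L → ℝ), (∀ k, 0 < wstar k) →
      Tendsto (fun N => zit m N) atTop (nhds wstar) →
      (∀ v : Fin L → ℝ, Matrix.vecMul v (F wstar) = v → ∑ i, v i = 1 → v = z) →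
      Tendsto (fun N => zit (m+1) N) atTop (nhds z) := by
    intro m wstar hws hwlim huniq
    refine EmusAux.tendsto_fixed_vectors (fun N => Fbar N (zit m N)) (F wstar)
      (hmatconv (fun N => zit m N) wstar hws hwlim) (fun N => zit (m+1) N) ?_ z huniq
    have hwev : ∀ᶠ N in atTop, ∀ k, 0 < zit m N k := by
      rw [eventually_all]
      intro k
      exact ((tendsto_pi_nhds.1 hwlim) k).eventually (eventually_gt_nhds (hws k))
    filter_upwards [hwev, eventually_ge_atTop 1] with N hwp hN1
    have heig := hzit m N hN1
    refine ⟨?_, heig.2, heig.1⟩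
    exact EmusAux.fixed_prob_nonneg (Fbar N (zit m N)) (hFbarnonneg N _ hwp)
      (hFbarirr N hN1 _ hwp) (fun k => nN N k / zit m N k)
      (fun k => div_pos (hnNpos N k) (hwp k)) (hFbarright N hN1 _ hwp)
      _ heig.1 heig.2
  -- conclusion by induction on m
  intro m hm
  induction m with
  | zero => omega
  | succ m ih =>
    by_cases hm0 : m = 0
    · subst hm0
      refine hstep 0 n hnpos ?_ hzuniq
      have : (fun N => zit 0 N) = fun N => nN N := funext hzit0
      rw [this]
      exact tendsto_pi_nhds.2 hnlim
    · exact hstep m z hzpos (ih (Nat.one_le_iff_ne_zero.2 hm0)) huniqz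
end
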